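/- arXiv:2006.05114 — 10 statements merged into one kernel-verified Lean document; each statement's English description precedes it below -/
import Mathlib

section
/- For all complex numbers z1, z2 (with the convention 0·ln 0 = 0), |Im((z1·ln(|z1|²) − z2·ln(|z2|²))·(conj(z1) − conj(z2)))| ≤ 2|z1 − z2|². -/
open Complex

/-- Key estimate, assuming `|w2| ≤ |w1|`. -/
lemma aux_key (w1 w2 : ℂ) (h : ‖w2‖ ≤ ‖w1‖) :
    |(Real.log (‖w2‖ ^ 2) - Real.log (‖w1‖ ^ 2)) *
      (w1 * (starRingEnd ℂ) w2).im| ≤ 2 * ‖w1 - w2‖ ^ 2 := by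
  rcases eq_or_lt_of_le (norm_nonneg w2) with h0 | h0
  · have hz : w2 = 0 := norm_eq_zero.mp h0.symm
    simp [hz]
  · have hw1 : (0 : ℝ) < ‖w1‖ := lt_of_lt_of_le h0 h
    set r1 := ‖w1‖
    set r2 := ‖w2‖
    have hlog : |Real.log (r2 ^ 2) - Real.log (r1 ^ 2)|
        ≤ 2 * (r1 - r2) / r2 := by
      rw [abs_sub_comm]
      have hdiff : Real.log (r1 ^ 2) - Real.log (r2 ^ 2)
          = 2 * Real.log (r1 / r2) := by
        rw [Real.log_div (ne_of_gt hw1) (ne_of_gt h0), Real.log_pow, Real.log_pow]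
        push_cast; ring
      have hnn : 0 ≤ Real.log (r1 ^ 2) - Real.log (r2 ^ 2) := by
        rw [hdiff]
        have : (1 : ℝ) ≤ r1 / r2 := (one_le_div h0).mpr h
        have := Real.log_nonneg this
        linarith
      rw [_root_.abs_of_nonneg hnn, hdiff]
      have hle : Real.log (r1 / r2) ≤ r1 / r2 - 1 :=
        Real.log_le_sub_one_of_pos (div_pos hw1 h0)
      have : r1 / r2 - 1 = (r1 - r2) / r2 := by field_simp
      rw [this] at hle
      rw [mul_div_assoc]
      linarith
    have him : |(w1 * (starRingEnd ℂ) w2).im| ≤ ‖w1 - w2‖ * r2 := by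
      have heq : (w1 * (starRingEnd ℂ) w2).im
          = ((w1 - w2) * (starRingEnd ℂ) w2).im := by
        have : ((w2 : ℂ) * (starRingEnd ℂ) w2).im = 0 := by
          simp [Complex.mul_im, Complex.conj_re, Complex.conj_im]; ring
        rw [sub_mul, Complex.sub_im, this, sub_zero]
      rw [heq]
      calc |((w1 - w2) * (starRingEnd ℂ) w2).im|
        ≤ ‖(w1 - w2) * (starRingEnd ℂ) w2‖ := Complex.abs_im_le_norm _
        _ = ‖w1 - w2‖ * r2 := by rw [norm_mul, Complex.norm_conj]
    have hab : r1 - r2 ≤ ‖w1 - w2‖ := by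
      have := abs_norm_sub_norm_le w1 w2
      have := abs_le.mp this
      linarith [this.2, le_abs_self (r1 - r2)]
    rw [abs_mul]
    calc |Real.log (r2 ^ 2) - Real.log (r1 ^ 2)| * |(w1 * (starRingEnd ℂ) w2).im|
        ≤ (2 * (r1 - r2) / r2) * (‖w1 - w2‖ * r2) := by
          apply mul_le_mul hlog him (abs_nonneg _)
          have h12 : (0:ℝ) ≤ r1 - r2 := by linarith
          positivity
      _ = 2 * (r1 - r2) * ‖w1 - w2‖ := by field_simp
      _ ≤ 2 * ‖w1 - w2‖ ^ 2 := by nlinarith [norm_nonneg (w1 - w2)]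

/-- Lemma (Cazenave–Haraux): for all complex `z1, z2` (with the convention
`0 · ln 0 = 0`, automatic since `Real.log 0 = 0`),
`|Im((z1 ln|z1|² − z2 ln|z2|²)(conj z1 − conj z2))| ≤ 2|z1 − z2|²`. -/
theorem stmt0 (z1 z2 : ℂ) :
    |(((z1 * (Real.log (‖z1‖ ^ 2) : ℝ) -
        z2 * (Real.log (‖z2‖ ^ 2) : ℝ)) *
        ((starRingEnd ℂ) z1 - (starRingEnd ℂ) z2)).im)| ≤
      2 * ‖z1 - z2‖ ^ 2 := by
  have heq : (((z1 * (Real.log (‖z1‖ ^ 2) : ℝ) -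
        z2 * (Real.log (‖z2‖ ^ 2) : ℝ)) *
        ((starRingEnd ℂ) z1 - (starRingEnd ℂ) z2)).im)
      = (Real.log (‖z2‖ ^ 2) - Real.log (‖z1‖ ^ 2)) *
        (z1 * (starRingEnd ℂ) z2).im := by
    simp [Complex.mul_im, Complex.mul_re, Complex.sub_im, Complex.sub_re,
      Complex.conj_re, Complex.conj_im, Complex.ofReal_re, Complex.ofReal_im]
    ring
  rw [heq]
  rcases le_total (‖z2‖) (‖z1‖) with h | h
  · exact aux_key z1 z2 h
  · have := aux_key z2 z1 h
    have him : (z2 * (starRingEnd ℂ) z1).im = -(z1 * (starRingEnd ℂ) z2).im := by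
      simp [Complex.mul_im, Complex.conj_re, Complex.conj_im]; ring
    rw [him] at this
    have habs : ‖z2 - z1‖ = ‖z1 - z2‖ := by
      rw [← norm_neg]; ring_nf
    rw [habs] at this
    calc |(Real.log (‖z2‖ ^ 2) - Real.log (‖z1‖ ^ 2)) *
          (z1 * (starRingEnd ℂ) z2).im|
        = |(Real.log (‖z1‖ ^ 2) - Real.log (‖z2‖ ^ 2)) *
          -(z1 * (starRingEnd ℂ) z2).im| := by rw [abs_mul, abs_mul, abs_sub_comm, abs_neg]
      _ ≤ 2 * ‖z1 - z2‖ ^ 2 := this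
end

section
/- Let n ≥ 2 be an integer and 0 < ε ≤ 1. Define q_n^ε(ρ) = ln(ε²) − ((n+1)/n)(1 − ρ/ε²)^n − Σ_{k=1}^{n−1} (1/k)(1 − ρ/ε²)^k for ρ ∈ [0, ε²]. Then for all ρ ∈ [0, ε²], |q_n^ε(ρ)| ≤ 2 + ln(n·ε^{−2}). -/
open Real

lemma harm (n : ℕ) (hn : 1 ≤ n) :
    ∑ k ∈ Finset.Icc 1 n, (1 / (k : ℝ)) ≤ 1 + Real.log n := by
  induction n, hn using Nat.le_induction with
  | base => simp
  | succ n hn ih =>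
    rw [Finset.sum_Icc_succ_top (by omega)]
    have hn0 : (0:ℝ) < n := by exact_mod_cast hn
    have hs : (0:ℝ) < (n:ℝ)+1 := by linarith
    have hlog : Real.log ((n:ℝ)/((n:ℝ)+1)) ≤ (n:ℝ)/((n:ℝ)+1) - 1 :=
      Real.log_le_sub_one_of_pos (by positivity)
    rw [Real.log_div (ne_of_gt hn0) (ne_of_gt hs)] at hlog
    have key : 1 / ((n:ℝ)+1) ≤ Real.log ((n:ℝ)+1) - Real.log n := by
      have : (n:ℝ)/((n:ℝ)+1) - 1 = -(1/((n:ℝ)+1)) := by field_simp; ring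
      rw [this] at hlog; linarith
    push_cast
    linarith

noncomputable def qfun (n : ℕ) (ε ρ : ℝ) : ℝ :=
  Real.log (ε ^ 2) - ((n + 1 : ℝ) / n) * (1 - ρ / ε ^ 2) ^ n
    - ∑ k ∈ Finset.Icc 1 (n - 1), (1 / (k : ℝ)) * (1 - ρ / ε ^ 2) ^ k

/-- For `n ≥ 2`, `0 < ε ≤ 1` and `ρ ∈ [0, ε²]`, `|q_n^ε(ρ)| ≤ 2 + ln(n ε⁻²)`. -/
theorem stmt3 (n : ℕ) (hn : 2 ≤ n) (ε : ℝ) (hε : 0 < ε) (hε1 : ε ≤ 1) :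
    ∀ ρ ∈ Set.Icc (0 : ℝ) (ε ^ 2),
      |qfun n ε ρ| ≤ 2 + Real.log ((n : ℝ) * ε⁻¹ ^ 2) := by
  intro ρ hρ
  obtain ⟨h0, h1⟩ := hρ
  have hε2 : (0:ℝ) < ε ^ 2 := by positivity
  set t : ℝ := 1 - ρ / ε ^ 2 with ht
  have ht0 : 0 ≤ t := by
    rw [ht]
    have : ρ / ε ^ 2 ≤ 1 := (div_le_one hε2).mpr h1
    linarith
  have ht1 : t ≤ 1 := by
    rw [ht]
    have : 0 ≤ ρ / ε ^ 2 := div_nonneg h0 (le_of_lt hε2)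
    linarith
  have hnR : (0:ℝ) < n := by positivity
  have htk : ∀ k : ℕ, t ^ k ≤ 1 := fun k => pow_le_one₀ ht0 ht1
  -- split n into Icc 1 (n-1) plus top
  obtain ⟨m, rfl⟩ : ∃ m, n = m + 1 := ⟨n - 1, by omega⟩
  have hm : 1 ≤ m := by omega
  have hsum : ∑ k ∈ Finset.Icc 1 (m+1), (1/(k:ℝ)) * t ^ k
      = (∑ k ∈ Finset.Icc 1 m, (1/(k:ℝ)) * t ^ k) + (1/((m:ℝ)+1)) * t ^ (m+1) := by
    rw [Finset.sum_Icc_succ_top (by omega)]; push_cast; ring_nf; simp only [mul_comm]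
  have hS1 : ∑ k ∈ Finset.Icc 1 (m+1), (1/(k:ℝ)) * t ^ k
      ≤ ∑ k ∈ Finset.Icc 1 (m+1), (1/(k:ℝ)) := by
    apply Finset.sum_le_sum
    intro k hk
    have hk1 : 1 ≤ k := (Finset.mem_Icc.mp hk).1
    have : (0:ℝ) ≤ 1/(k:ℝ) := by positivity
    calc (1/(k:ℝ)) * t ^ k ≤ (1/(k:ℝ)) * 1 := by
          exact mul_le_mul_of_nonneg_left (htk k) this
      _ = 1/(k:ℝ) := mul_one _
  have hharm := harm (m+1) (by omega)
  -- the sum S in qfun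
  have hS0 : 0 ≤ ∑ k ∈ Finset.Icc 1 (m+1-1), (1 / (k : ℝ)) * t ^ k := by
    apply Finset.sum_nonneg
    intro k hk
    have : (0:ℝ) ≤ 1/(k:ℝ) := by positivity
    exact mul_nonneg this (pow_nonneg ht0 k)
  have hms : m + 1 - 1 = m := by omega
  have hA : ((m+1+1:ℝ)/(m+1:ℝ)) * t ^ (m+1)
      = t ^ (m+1) + (1/((m:ℝ)+1)) * t ^ (m+1) := by
    have : ((m:ℝ)+1) ≠ 0 := by positivity
    field_simp
  have hA0 : 0 ≤ ((m+1+1:ℝ)/(m+1:ℝ)) * t ^ (m+1) := by positivity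
  -- log facts
  have hlogε : Real.log (ε ^ 2) ≤ 0 :=
    Real.log_nonpos (by positivity) (pow_le_one₀ (le_of_lt hε) hε1)
  have hlogn : 0 ≤ Real.log ((m:ℝ)+1) := Real.log_nonneg (by push_cast; linarith [hm])
  have hR : Real.log (((m+1:ℕ) : ℝ) * ε⁻¹ ^ 2)
      = Real.log ((m:ℝ)+1) - Real.log (ε ^ 2) := by
    rw [Real.log_mul (by positivity) (by positivity), Real.log_pow, Real.log_pow,
      Real.log_inv]
    push_cast; ring
  rw [abs_le]
  unfold qfun
  rw [hR, hms]
  constructor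
  · -- lower bound
    have key : ((m+1+1:ℝ)/(m+1:ℝ)) * t ^ (m+1)
        + ∑ k ∈ Finset.Icc 1 m, (1/(k:ℝ)) * t ^ k ≤ 2 + Real.log ((m:ℝ)+1) := by
      rw [hA]
      have h2 : (1/((m:ℝ)+1)) * t ^ (m+1) + ∑ k ∈ Finset.Icc 1 m, (1/(k:ℝ)) * t ^ k
          ≤ 1 + Real.log ((m:ℝ)+1) := by
        have := hS1.trans hharm
        rw [hsum] at this
        push_cast at this ⊢
        linarith
      have := htk (m+1)
      linarith
    push_cast at key ⊢
    linarith
  · -- upper bound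
    rw [hms] at hS0
    push_cast at hA0 hS0 ⊢
    linarith
end

section
/- Let n ≥ 2 be an integer, ε > 0, and define f_n^ε(ρ) = ln ρ for ρ ≥ ε², and f_n^ε(ρ) = q_n^ε(ρ) = ln(ε²) − ((n+1)/n)(1 − ρ/ε²)^n − Σ_{k=1}^{n−1}(1/k)(1 − ρ/ε²)^k for 0 ≤ ρ < ε². Then for all z1, z2 ∈ ℂ with |z1|, |z2| ≤ ε, one has |f_n^ε(|z1|²) − f_n^ε(|z2|²)| ≤ (4n/ε)·|z1 − z2|. -/
open Real Complex

/-- The locally regularized logarithm `f_n^ε` of the LER construction: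
`f_n^ε(ρ) = ln ρ` for `ρ ≥ ε²`, and `f_n^ε(ρ) = q_n^ε(ρ)` for `0 ≤ ρ < ε²`. -/
noncomputable def freg (n : ℕ) (ε ρ : ℝ) : ℝ :=
  if ε ^ 2 ≤ ρ then Real.log ρ else qfun n ε ρ

lemma pow_sub_pow_abs_le {x y : ℝ} (hx0 : 0 ≤ x) (hx1 : x ≤ 1) (hy0 : 0 ≤ y) (hy1 : y ≤ 1) (k : ℕ) :
    |x ^ k - y ^ k| ≤ k * |x - y| := by
  rw [← geom_sum₂_mul, abs_mul]
  gcongr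
  calc |∑ i ∈ Finset.range k, x ^ i * y ^ (k - 1 - i)|
      ≤ ∑ i ∈ Finset.range k, |x ^ i * y ^ (k - 1 - i)| := Finset.abs_sum_le_sum_abs _ _
    _ ≤ ∑ _i ∈ Finset.range k, (1:ℝ) := by
        apply Finset.sum_le_sum
        intro i _
        rw [abs_mul, _root_.abs_pow, _root_.abs_pow, _root_.abs_of_nonneg hx0,
          _root_.abs_of_nonneg hy0]
        calc x ^ i * y ^ (k-1-i) ≤ 1 * 1 :=
              mul_le_mul (pow_le_one₀ hx0 hx1) (pow_le_one₀ hy0 hy1) (pow_nonneg hy0 _) zero_le_one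
          _ = 1 := by ring
    _ = k := by simp

lemma q_lip (n : ℕ) (hn : 2 ≤ n) (ε : ℝ) (hε : 0 < ε) {a b : ℝ}
    (ha0 : 0 ≤ a) (ha1 : a ≤ ε ^ 2) (hb0 : 0 ≤ b) (hb1 : b ≤ ε ^ 2) :
    |qfun n ε a - qfun n ε b| ≤ (2 * n / ε ^ 2) * |a - b| := by
  have hε2 : (0:ℝ) < ε ^ 2 := by positivity
  set u : ℝ := 1 - a / ε ^ 2 with hu
  set v : ℝ := 1 - b / ε ^ 2 with hv
  have hu0 : 0 ≤ u := by rw [hu, sub_nonneg]; exact div_le_one_of_le₀ ha1 hε2.le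
  have hu1 : u ≤ 1 := by rw [hu]; simp; positivity
  have hv0 : 0 ≤ v := by rw [hv, sub_nonneg]; exact div_le_one_of_le₀ hb1 hε2.le
  have hv1 : v ≤ 1 := by rw [hv]; simp; positivity
  have huv : |u - v| = |a - b| / ε ^ 2 := by
    rw [hu, hv, show (1 - a / ε ^ 2) - (1 - b / ε ^ 2) = (b - a) / ε ^ 2 by ring,
      abs_div, _root_.abs_of_pos hε2, abs_sub_comm]
  have hsum : ∑ k ∈ Finset.Icc 1 (n - 1), (1 / (k : ℝ)) * (v ^ k - u ^ k)
      = (∑ k ∈ Finset.Icc 1 (n - 1), (1 / (k : ℝ)) * v ^ k)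
        - (∑ k ∈ Finset.Icc 1 (n - 1), (1 / (k : ℝ)) * u ^ k) := by
    rw [← Finset.sum_sub_distrib]
    exact Finset.sum_congr rfl fun k _ => by ring
  have key : qfun n ε a - qfun n ε b =
      ((n + 1 : ℝ) / n) * (v ^ n - u ^ n)
        + ∑ k ∈ Finset.Icc 1 (n - 1), (1 / (k : ℝ)) * (v ^ k - u ^ k) := by
    rw [qfun, qfun, ← hu, ← hv, hsum]; ring
  rw [key]
  have hnpos : (0:ℝ) < n := by positivity
  calc |((n + 1 : ℝ) / n) * (v ^ n - u ^ n)
        + ∑ k ∈ Finset.Icc 1 (n - 1), (1 / (k : ℝ)) * (v ^ k - u ^ k)|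
      ≤ |((n + 1 : ℝ) / n) * (v ^ n - u ^ n)|
        + |∑ k ∈ Finset.Icc 1 (n - 1), (1 / (k : ℝ)) * (v ^ k - u ^ k)| := abs_add_le _ _
    _ ≤ ((n + 1 : ℝ) / n) * (n * |v - u|)
        + ∑ k ∈ Finset.Icc 1 (n - 1), (1 / (k : ℝ)) * (k * |v - u|) := by
        gcongr ?_ + ?_
        · rw [abs_mul, _root_.abs_of_nonneg (by positivity : (0:ℝ) ≤ (n+1:ℝ)/n)]
          gcongr
          exact pow_sub_pow_abs_le hv0 hv1 hu0 hu1 n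
        · calc |∑ k ∈ Finset.Icc 1 (n - 1), (1 / (k : ℝ)) * (v ^ k - u ^ k)|
              ≤ ∑ k ∈ Finset.Icc 1 (n - 1), |(1 / (k : ℝ)) * (v ^ k - u ^ k)| :=
                Finset.abs_sum_le_sum_abs _ _
            _ ≤ ∑ k ∈ Finset.Icc 1 (n - 1), (1 / (k : ℝ)) * (k * |v - u|) := by
                apply Finset.sum_le_sum
                intro k _
                rw [abs_mul, _root_.abs_of_nonneg (by positivity : (0:ℝ) ≤ 1/(k:ℝ))]
                gcongr
                exact pow_sub_pow_abs_le hv0 hv1 hu0 hu1 k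
    _ = ((n + 1 : ℝ)) * |v - u| + ∑ k ∈ Finset.Icc 1 (n - 1), |v - u| := by
        congr 1
        · field_simp
        · apply Finset.sum_congr rfl
          intro k hk
          have hk1 : 1 ≤ k := (Finset.mem_Icc.mp hk).1
          have hkr : (k:ℝ) ≠ 0 := by positivity
          field_simp
    _ = ((n + 1 : ℝ)) * |v - u| + (n - 1 : ℝ) * |v - u| := by
        rw [Finset.sum_const, Nat.card_Icc, show n - 1 + 1 - 1 = n - 1 from by omega,
          nsmul_eq_mul, Nat.cast_sub (by omega : 1 ≤ n), Nat.cast_one]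
    _ = 2 * n * |v - u| := by ring
    _ = (2 * n / ε ^ 2) * |a - b| := by
        rw [abs_sub_comm, huv]; field_simp

lemma freg_eq_qfun (n : ℕ) (hn : 2 ≤ n) (ε : ℝ) (hε : 0 < ε) {ρ : ℝ}
    (hρ : ρ ≤ ε ^ 2) : freg n ε ρ = qfun n ε ρ := by
  rw [freg]
  split_ifs with h
  · have hρε : ρ = ε ^ 2 := le_antisymm hρ h
    rw [hρε, qfun]
    have h0 : (1 : ℝ) - ε ^ 2 / ε ^ 2 = 0 := by field_simp; ring
    rw [h0]
    rw [zero_pow (by omega : n ≠ 0)]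
    rw [Finset.sum_eq_zero fun k hk => by
      rw [zero_pow (by have := (Finset.mem_Icc.mp hk).1; omega : k ≠ 0), mul_zero]]
    ring
  · rfl

/-- For `n ≥ 2`, `ε > 0` and `|z1|, |z2| ≤ ε`,
`|f_n^ε(|z1|²) − f_n^ε(|z2|²)| ≤ (4n/ε)|z1 − z2|`. -/
theorem stmt4 (n : ℕ) (hn : 2 ≤ n) (ε : ℝ) (hε : 0 < ε) (z1 z2 : ℂ)
    (h1 : ‖z1‖ ≤ ε) (h2 : ‖z2‖ ≤ ε) :
    |freg n ε (‖z1‖ ^ 2) - freg n ε (‖z2‖ ^ 2)| ≤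
      (4 * n / ε) * ‖z1 - z2‖ := by
  have ha0 : (0:ℝ) ≤ ‖z1‖ ^ 2 := by positivity
  have hb0 : (0:ℝ) ≤ ‖z2‖ ^ 2 := by positivity
  have ha1 : ‖z1‖ ^ 2 ≤ ε ^ 2 := by gcongr
  have hb1 : ‖z2‖ ^ 2 ≤ ε ^ 2 := by gcongr
  rw [freg_eq_qfun n hn ε hε ha1, freg_eq_qfun n hn ε hε hb1]
  calc |qfun n ε (‖z1‖ ^ 2) - qfun n ε (‖z2‖ ^ 2)|
      ≤ (2 * n / ε ^ 2) * |‖z1‖ ^ 2 - ‖z2‖ ^ 2| :=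
        q_lip n hn ε hε ha0 ha1 hb0 hb1
    _ ≤ (2 * n / ε ^ 2) * (2 * ε * ‖z1 - z2‖) := by
        gcongr
        calc |‖z1‖ ^ 2 - ‖z2‖ ^ 2|
              = |‖z1‖ - ‖z2‖| * |‖z1‖ + ‖z2‖| := by
                rw [← abs_mul]; ring_nf
            _ ≤ ‖z1 - z2‖ * (2 * ε) := by
                apply mul_le_mul
                · exact abs_norm_sub_norm_le z1 z2
                · rw [_root_.abs_of_nonneg (by positivity)]; linarith
                · positivity
                · exact norm_nonneg _
            _ = 2 * ε * ‖z1 - z2‖ := by ring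
    _ = (4 * n / ε) * ‖z1 - z2‖ := by
        field_simp; ring
end

section
/- Let n ≥ 2 be an integer, ε > 0, and f_n^ε the locally regularized logarithm as in the LER construction. Then for all z1, z2 ∈ ℂ, |Im((z1·f_n^ε(|z1|²) − z2·f_n^ε(|z2|²))·(conj(z1) − conj(z2)))| ≤ 4n·|z1 − z2|². -/
set_option maxHeartbeats 800000

open Real Complex

lemma pow_lip (k : ℕ) {a b : ℝ} (ha : a ∈ Set.Icc (0:ℝ) 1) (hb : b ∈ Set.Icc (0:ℝ) 1) :
    |a ^ k - b ^ k| ≤ k * |a - b| := by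
  induction k with
  | zero => simp
  | succ k ih =>
    have h1 : a ^ (k+1) - b ^ (k+1) = a ^ k * (a - b) + b * (a ^ k - b ^ k) := by ring
    have hak : |a ^ k| ≤ 1 := by
      rw [_root_.abs_of_nonneg (pow_nonneg ha.1 _)]; exact pow_le_one₀ ha.1 ha.2
    have hbb : |b| ≤ 1 := by rw [_root_.abs_of_nonneg hb.1]; exact hb.2
    calc |a ^ (k+1) - b ^ (k+1)| ≤ |a ^ k * (a - b)| + |b * (a ^ k - b ^ k)| := by
          rw [h1]; exact abs_add_le _ _
      _ ≤ 1 * |a - b| + 1 * (k * |a - b|) := by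
          rw [abs_mul, abs_mul]
          gcongr
      _ = (k+1 : ℕ) * |a - b| := by push_cast; ring

lemma qlip (n : ℕ) (hn : 1 ≤ n) {ε ρ1 ρ2 : ℝ} (hε : 0 < ε)
    (h1 : ρ1 ∈ Set.Icc 0 (ε ^ 2)) (h2 : ρ2 ∈ Set.Icc 0 (ε ^ 2)) :
    |qfun n ε ρ1 - qfun n ε ρ2| ≤ 2 * n / ε ^ 2 * |ρ1 - ρ2| := by
  have hε2 : (0:ℝ) < ε ^ 2 := by positivity
  set a := 1 - ρ1 / ε ^ 2 with ha_def
  set b := 1 - ρ2 / ε ^ 2 with hb_def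
  have ha : a ∈ Set.Icc (0:ℝ) 1 := by
    constructor
    · have := h1.2; rw [ha_def]; have : ρ1 / ε ^ 2 ≤ 1 := by
        rw [div_le_one hε2]; exact h1.2
      linarith
    · rw [ha_def]; have : 0 ≤ ρ1 / ε ^ 2 := div_nonneg h1.1 hε2.le
      linarith
  have hb : b ∈ Set.Icc (0:ℝ) 1 := by
    constructor
    · rw [hb_def]; have : ρ2 / ε ^ 2 ≤ 1 := by
        rw [div_le_one hε2]; exact h2.2
      linarith
    · rw [hb_def]; have : 0 ≤ ρ2 / ε ^ 2 := div_nonneg h2.1 hε2.le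
      linarith
  have hab : |a - b| = |ρ1 - ρ2| / ε ^ 2 := by
    rw [ha_def, hb_def]
    rw [show (1 - ρ1 / ε ^ 2) - (1 - ρ2 / ε ^ 2) = -((ρ1 - ρ2)/ ε ^ 2) by ring]
    rw [abs_neg, abs_div, _root_.abs_of_pos hε2]
  have hq : qfun n ε ρ1 - qfun n ε ρ2
      = ((n + 1 : ℝ) / n) * (b ^ n - a ^ n)
        + ∑ k ∈ Finset.Icc 1 (n - 1), (1 / (k : ℝ)) * (b ^ k - a ^ k) := by
    simp only [qfun, ← ha_def, ← hb_def, mul_sub, Finset.sum_sub_distrib]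
    ring
  have hnn : (0:ℝ) < n := by exact_mod_cast hn
  have habs : |a - b| = |b - a| := (abs_sub_comm a b)
  have t1 : |((n + 1 : ℝ) / n) * (b ^ n - a ^ n)| ≤ (n + 1) * |a - b| := by
    rw [abs_mul]
    have e1 : |((n:ℝ) + 1) / n| = ((n:ℝ) + 1) / n := by
      rw [_root_.abs_of_pos]; positivity
    rw [e1]
    calc ((n:ℝ) + 1) / n * |b ^ n - a ^ n| ≤ ((n:ℝ) + 1) / n * (n * |b - a|) := by
          gcongr; exact pow_lip n hb ha
      _ = ((n:ℝ) + 1) * |a - b| := by rw [habs, ← mul_assoc, div_mul_cancel₀ _ hnn.ne']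
  have t2 : |∑ k ∈ Finset.Icc 1 (n - 1), (1 / (k : ℝ)) * (b ^ k - a ^ k)|
      ≤ (n - 1 : ℝ) * |a - b| := by
    calc |∑ k ∈ Finset.Icc 1 (n - 1), (1 / (k : ℝ)) * (b ^ k - a ^ k)|
        ≤ ∑ k ∈ Finset.Icc 1 (n - 1), |(1 / (k : ℝ)) * (b ^ k - a ^ k)| :=
          Finset.abs_sum_le_sum_abs _ _
      _ ≤ ∑ k ∈ Finset.Icc 1 (n - 1), |a - b| := by
          apply Finset.sum_le_sum
          intro k hk
          have hk1 : 1 ≤ k := (Finset.mem_Icc.mp hk).1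
          have hk0 : (0:ℝ) < k := by exact_mod_cast hk1
          rw [abs_mul]
          calc |1 / (k:ℝ)| * |b ^ k - a ^ k| ≤ (1 / (k:ℝ)) * (k * |b - a|) := by
                rw [_root_.abs_of_pos (by positivity : (0:ℝ) < 1 / k)]
                gcongr
                exact pow_lip k hb ha
            _ = |a - b| := by rw [habs, ← mul_assoc, one_div_mul_cancel hk0.ne', one_mul]
      _ = (↑(n - 1)) * |a - b| := by
          rw [Finset.sum_const, Nat.card_Icc]
          simp [nsmul_eq_mul]
      _ = ((n:ℝ) - 1) * |a - b| := by rw [Nat.cast_sub hn]; push_cast; ring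
  calc |qfun n ε ρ1 - qfun n ε ρ2|
      ≤ (n + 1) * |a - b| + (n - 1 : ℝ) * |a - b| := by
        rw [hq]
        exact le_trans (abs_add_le _ _) (add_le_add t1 t2)
    _ = 2 * n * |a - b| := by ring
    _ = 2 * n / ε ^ 2 * |ρ1 - ρ2| := by rw [hab]; field_simp

lemma freg_eq_q (n : ℕ) (hn : 1 ≤ n) {ε ρ : ℝ} (hε : 0 < ε) (hρ : ρ ≤ ε ^ 2) :
    freg n ε ρ = qfun n ε ρ := by
  unfold freg
  rcases lt_or_eq_of_le hρ with h | h
  · rw [if_neg (not_le.mpr h)]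
  · subst h
    rw [if_pos le_rfl]
    unfold qfun
    rw [div_self (by positivity : (ε:ℝ) ^ 2 ≠ 0), sub_self, zero_pow (by omega : n ≠ 0)]
    rw [Finset.sum_eq_zero (fun k hk => by
      have h1 : 1 ≤ k := (Finset.mem_Icc.mp hk).1
      rw [zero_pow (by omega : k ≠ 0), mul_zero])]
    ring

lemma loglip {a b : ℝ} (ha : 0 < a) (hab : a ≤ b) :
    Real.log b - Real.log a ≤ (b - a) / a := by
  have hb : 0 < b := lt_of_lt_of_le ha hab
  have h1 : Real.log b - Real.log a = Real.log (b / a) := (Real.log_div hb.ne' ha.ne').symm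
  rw [h1]
  have := Real.log_le_sub_one_of_pos (by positivity : (0:ℝ) < b / a)
  calc Real.log (b / a) ≤ b / a - 1 := this
    _ = (b - a) / a := by field_simp

lemma freglip (n : ℕ) (hn : 2 ≤ n) {ε r1 r2 : ℝ} (hε : 0 < ε)
    (hr2 : 0 ≤ r2) (hr : r2 ≤ r1) :
    |freg n ε (r1 ^ 2) - freg n ε (r2 ^ 2)| ≤ 4 * n * (r1 - r2) / max ε r2 := by
  have hn1 : 1 ≤ n := by omega
  have hn4 : (4:ℝ) ≤ 4 * n := by
    have : (2:ℝ) ≤ n := by exact_mod_cast hn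
    nlinarith
  have hr1 : 0 ≤ r1 := hr2.trans hr
  rcases le_or_gt ε r2 with hc | hc
  · have hr2p : 0 < r2 := lt_of_lt_of_le hε hc
    have hmax : max ε r2 = r2 := max_eq_right hc
    have he1 : freg n ε (r1 ^ 2) = Real.log (r1 ^ 2) := by
      rw [freg, if_pos]; nlinarith
    have he2 : freg n ε (r2 ^ 2) = Real.log (r2 ^ 2) := by
      rw [freg, if_pos]; nlinarith
    rw [he1, he2, hmax]
    have hd : Real.log (r1 ^ 2) - Real.log (r2 ^ 2) = 2 * (Real.log r1 - Real.log r2) := by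
      rw [Real.log_pow, Real.log_pow]; push_cast; ring
    have hlog : Real.log r2 ≤ Real.log r1 := Real.log_le_log hr2p hr
    rw [_root_.abs_of_nonneg (by linarith [hd] : (0:ℝ) ≤ Real.log (r1^2) - Real.log (r2^2)), hd]
    have := loglip hr2p hr
    calc 2 * (Real.log r1 - Real.log r2) ≤ 2 * ((r1 - r2) / r2) := by linarith
      _ ≤ 4 * n * (r1 - r2) / r2 := by
        rw [show 2 * ((r1 - r2) / r2) = 2 * (r1 - r2) / r2 from by ring,
          div_le_div_iff₀ hr2p hr2p]
        nlinarith [mul_nonneg (mul_nonneg (by linarith : (0:ℝ) ≤ 4 * n - 2)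
          (sub_nonneg.mpr hr)) hr2p.le]
  · rcases le_or_gt r1 ε with hc1 | hc1
    · have hmax : max ε r2 = ε := max_eq_left hc.le
      have hq1 : freg n ε (r1 ^ 2) = qfun n ε (r1 ^ 2) :=
        freg_eq_q n hn1 hε (by nlinarith)
      have hq2 : freg n ε (r2 ^ 2) = qfun n ε (r2 ^ 2) :=
        freg_eq_q n hn1 hε (by nlinarith)
      rw [hq1, hq2, hmax]
      have := qlip n hn1 (ρ1 := r1 ^ 2) (ρ2 := r2 ^ 2) hε
        (Set.mem_Icc.mpr ⟨by positivity, by nlinarith⟩)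
        (Set.mem_Icc.mpr ⟨by positivity, by nlinarith⟩)
      have habs : |r1 ^ 2 - r2 ^ 2| = (r1 + r2) * (r1 - r2) := by
        rw [_root_.abs_of_nonneg (by nlinarith : (0:ℝ) ≤ r1 ^ 2 - r2 ^ 2)]; ring
      calc |qfun n ε (r1 ^ 2) - qfun n ε (r2 ^ 2)| ≤ 2 * n / ε ^ 2 * |r1 ^ 2 - r2 ^ 2| := this
        _ = 2 * n * (r1 + r2) * (r1 - r2) / ε ^ 2 := by rw [habs]; ring
        _ ≤ 4 * n * (r1 - r2) / ε := by
          rw [div_le_div_iff₀ (by positivity) hε]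
          have h0 : (0:ℝ) ≤ (n:ℝ) := Nat.cast_nonneg n
          nlinarith [mul_nonneg (mul_nonneg (mul_nonneg h0
            (by linarith : (0:ℝ) ≤ 2 * ε - r1 - r2)) (sub_nonneg.mpr hr)) hε.le]
    · have hmax : max ε r2 = ε := max_eq_left hc.le
      rw [hmax]
      have hsplit : |freg n ε (r1 ^ 2) - freg n ε (r2 ^ 2)|
          ≤ |freg n ε (r1 ^ 2) - freg n ε (ε ^ 2)| + |freg n ε (ε ^ 2) - freg n ε (r2 ^ 2)| := by
        exact abs_sub_le _ _ _
      have p1 : |freg n ε (r1 ^ 2) - freg n ε (ε ^ 2)| ≤ 2 * (r1 - ε) / ε := by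
        have he1 : freg n ε (r1 ^ 2) = Real.log (r1 ^ 2) := by
          rw [freg, if_pos]; nlinarith
        have he2 : freg n ε (ε ^ 2) = Real.log (ε ^ 2) := by rw [freg, if_pos le_rfl]
        rw [he1, he2]
        have hd : Real.log (r1 ^ 2) - Real.log (ε ^ 2) = 2 * (Real.log r1 - Real.log ε) := by
          rw [Real.log_pow, Real.log_pow]; push_cast; ring
        have hlog : Real.log ε ≤ Real.log r1 := Real.log_le_log hε hc1.le
        rw [_root_.abs_of_nonneg (by linarith [hd] : (0:ℝ) ≤ Real.log (r1^2) - Real.log (ε^2)), hd]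
        have := loglip hε hc1.le
        calc 2 * (Real.log r1 - Real.log ε) ≤ 2 * ((r1 - ε) / ε) := by linarith
          _ = 2 * (r1 - ε) / ε := by ring
      have p2 : |freg n ε (ε ^ 2) - freg n ε (r2 ^ 2)| ≤ 4 * n * (ε - r2) / ε := by
        have hq1 : freg n ε (ε ^ 2) = qfun n ε (ε ^ 2) := freg_eq_q n hn1 hε le_rfl
        have hq2 : freg n ε (r2 ^ 2) = qfun n ε (r2 ^ 2) :=
          freg_eq_q n hn1 hε (by nlinarith)
        rw [hq1, hq2]
        have := qlip n hn1 (ρ1 := ε ^ 2) (ρ2 := r2 ^ 2) hε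
          (Set.mem_Icc.mpr ⟨by positivity, le_rfl⟩)
          (Set.mem_Icc.mpr ⟨by positivity, by nlinarith⟩)
        have habs : |ε ^ 2 - r2 ^ 2| = (ε + r2) * (ε - r2) := by
          rw [_root_.abs_of_nonneg (by nlinarith : (0:ℝ) ≤ ε ^ 2 - r2 ^ 2)]; ring
        calc |qfun n ε (ε ^ 2) - qfun n ε (r2 ^ 2)| ≤ 2 * n / ε ^ 2 * |ε ^ 2 - r2 ^ 2| := this
          _ = 2 * n * (ε + r2) * (ε - r2) / ε ^ 2 := by rw [habs]; ring
          _ ≤ 4 * n * (ε - r2) / ε := by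
            rw [div_le_div_iff₀ (by positivity) hε]
            have h0 : (0:ℝ) ≤ (n:ℝ) := Nat.cast_nonneg n
            nlinarith [mul_nonneg (mul_nonneg (mul_nonneg h0
              (by linarith : (0:ℝ) ≤ ε - r2)) (by linarith : (0:ℝ) ≤ ε - r2)) hε.le]
      calc |freg n ε (r1 ^ 2) - freg n ε (r2 ^ 2)|
          ≤ 2 * (r1 - ε) / ε + 4 * n * (ε - r2) / ε := le_trans hsplit (add_le_add p1 p2)
        _ ≤ 4 * n * (r1 - r2) / ε := by
          rw [← add_div, div_le_div_iff₀ hε hε]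
          nlinarith [mul_nonneg (mul_nonneg (by linarith : (0:ℝ) ≤ 4 * n - 2)
            (by linarith : (0:ℝ) ≤ r1 - ε)) hε.le]

lemma im_identity (z1 z2 : ℂ) (a b : ℝ) :
    ((z1 * a - z2 * b) * ((starRingEnd ℂ) z1 - (starRingEnd ℂ) z2)).im
      = ((starRingEnd ℂ) z1 * z2).im * (a - b) := by
  simp [Complex.mul_im, Complex.sub_im, Complex.sub_re, Complex.mul_re,
    Complex.conj_re, Complex.conj_im]
  ring

lemma im_bound2 (z1 z2 : ℂ) :
    |((starRingEnd ℂ) z1 * z2).im| ≤ ‖z2‖ * ‖z1 - z2‖ := by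
  have h : ((starRingEnd ℂ) z1 * z2).im = (((starRingEnd ℂ) z1 - (starRingEnd ℂ) z2) * z2).im := by
    simp [Complex.mul_im, Complex.sub_im, Complex.sub_re, Complex.conj_re, Complex.conj_im]
    ring
  rw [h]
  calc |(((starRingEnd ℂ) z1 - (starRingEnd ℂ) z2) * z2).im|
      ≤ ‖((starRingEnd ℂ) z1 - (starRingEnd ℂ) z2) * z2‖ :=
        Complex.abs_im_le_norm _
    _ = ‖z2‖ * ‖z1 - z2‖ := by
        rw [norm_mul, ← map_sub, Complex.norm_conj]; ring

lemma stmt6_aux (n : ℕ) (hn : 2 ≤ n) (ε : ℝ) (hε : 0 < ε) (z1 z2 : ℂ)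
    (h : ‖z2‖ ≤ ‖z1‖) :
    |(((z1 * (freg n ε (‖z1‖ ^ 2) : ℝ) -
        z2 * (freg n ε (‖z2‖ ^ 2) : ℝ)) *
        ((starRingEnd ℂ) z1 - (starRingEnd ℂ) z2)).im)| ≤
      4 * n * ‖z1 - z2‖ ^ 2 := by
  set r1 := ‖z1‖
  set r2 := ‖z2‖
  set d := ‖z1 - z2‖ with hd_def
  have hd0 : 0 ≤ d := norm_nonneg _
  have hM : 0 < max ε r2 := lt_of_lt_of_le hε (le_max_left _ _)
  rw [im_identity, abs_mul]
  have h1 : |((starRingEnd ℂ) z1 * z2).im| ≤ r2 * d := im_bound2 z1 z2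
  have h3 : r1 - r2 ≤ d := by
    have := norm_add_le (z1 - z2) z2
    simp only [sub_add_cancel] at this
    linarith
  have h2 : |freg n ε (r1 ^ 2) - freg n ε (r2 ^ 2)| ≤ 4 * n * d / max ε r2 := by
    calc |freg n ε (r1 ^ 2) - freg n ε (r2 ^ 2)| ≤ 4 * n * (r1 - r2) / max ε r2 :=
          freglip n hn hε (norm_nonneg _) h
      _ ≤ 4 * n * d / max ε r2 := by gcongr
  calc |((starRingEnd ℂ) z1 * z2).im| * |freg n ε (r1 ^ 2) - freg n ε (r2 ^ 2)|
      ≤ (r2 * d) * (4 * n * d / max ε r2) := by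
        apply mul_le_mul h1 h2 (abs_nonneg _) (by positivity)
    _ = 4 * n * d ^ 2 * (r2 / max ε r2) := by ring
    _ ≤ 4 * n * d ^ 2 * 1 := by
        gcongr
        exact (div_le_one hM).mpr (le_max_right _ _)
    _ = 4 * n * d ^ 2 := mul_one _

/-- For `n ≥ 2`, `ε > 0` and all `z1, z2 ∈ ℂ`,
`|Im((z1 f_n^ε(|z1|²) − z2 f_n^ε(|z2|²))(conj z1 − conj z2))| ≤ 4n|z1 − z2|²`. -/
theorem stmt6 (n : ℕ) (hn : 2 ≤ n) (ε : ℝ) (hε : 0 < ε) (z1 z2 : ℂ) :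
    |(((z1 * (freg n ε (‖z1‖ ^ 2) : ℝ) -
        z2 * (freg n ε (‖z2‖ ^ 2) : ℝ)) *
        ((starRingEnd ℂ) z1 - (starRingEnd ℂ) z2)).im)| ≤
      4 * n * ‖z1 - z2‖ ^ 2 := by
  rcases le_total (‖z2‖) (‖z1‖) with h | h
  · exact stmt6_aux n hn ε hε z1 z2 h
  · have he : ((z1 * (freg n ε (‖z1‖ ^ 2) : ℝ) -
        z2 * (freg n ε (‖z2‖ ^ 2) : ℝ)) *
        ((starRingEnd ℂ) z1 - (starRingEnd ℂ) z2))
        = ((z2 * (freg n ε (‖z2‖ ^ 2) : ℝ) -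
        z1 * (freg n ε (‖z1‖ ^ 2) : ℝ)) *
        ((starRingEnd ℂ) z2 - (starRingEnd ℂ) z1)) := by ring
    rw [he, norm_sub_rev z1 z2]
    exact stmt6_aux n hn ε hε z2 z1 h
end

section
/- Let n ≥ 2 be an integer and ε > 0. With f_n^ε as in the LER construction, the function g(ρ) = ρ·(f_n^ε)'(ρ) satisfies 0 ≤ g(ρ) ≤ 3 for all ρ ≥ 0. -/
open Real Complex

lemma aux_pow (m : ℕ) (s : ℝ) (h0 : 0 ≤ s) (h1 : s ≤ 1) :
    (1 - s) ^ m * (1 + m * s) ≤ 1 := by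
  induction m with
  | zero => simp
  | succ m ih =>
    have h2 : (0:ℝ) ≤ 1 - s := by linarith
    have h4 : (1 - s) * (1 + ((m:ℝ)+1) * s) ≤ 1 + m * s := by
      nlinarith [mul_nonneg (Nat.cast_nonneg m : (0:ℝ) ≤ m) (mul_nonneg h0 h0), mul_nonneg h0 h0]
    calc (1 - s) ^ (m+1) * (1 + ((m:ℕ)+1 : ℕ) * s)
        = (1 - s) ^ m * ((1 - s) * (1 + ((m:ℝ)+1) * s)) := by push_cast; ring
      _ ≤ (1 - s) ^ m * (1 + m * s) :=
          mul_le_mul_of_nonneg_left h4 (pow_nonneg h2 m)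
      _ ≤ 1 := ih

lemma qfun_hasDerivAt (n : ℕ) (hn : 1 ≤ n) (ε : ℝ) (hε : 0 < ε) (ρ : ℝ) :
    HasDerivAt (qfun n ε)
      ((((n:ℝ)+1) * (1 - ρ/ε^2)^(n-1)
        + ∑ k ∈ Finset.Icc 1 (n-1), (1 - ρ/ε^2)^(k-1)) / ε^2) ρ := by
  have hε2 : (ε^2) ≠ 0 := by positivity
  have hn0 : (n:ℝ) ≠ 0 := Nat.cast_ne_zero.mpr (by omega)
  have hbase : HasDerivAt (fun x : ℝ => 1 - x/ε^2) (-(1/ε^2)) ρ := by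
    simpa using ((hasDerivAt_id ρ).div_const (ε^2)).const_sub 1
  have hpow : ∀ k : ℕ, HasDerivAt (fun x : ℝ => (1 - x/ε^2)^k)
      ((k:ℝ) * (1 - ρ/ε^2)^(k-1) * (-(1/ε^2))) ρ := fun k => hbase.pow k
  have hsum : HasDerivAt (fun x : ℝ => ∑ k ∈ Finset.Icc 1 (n-1), (1/(k:ℝ)) * (1 - x/ε^2)^k)
      (∑ k ∈ Finset.Icc 1 (n-1), (1/(k:ℝ)) * ((k:ℝ) * (1 - ρ/ε^2)^(k-1) * (-(1/ε^2)))) ρ :=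
    HasDerivAt.fun_sum (fun k _ => (hpow k).const_mul _)
  have h1 : HasDerivAt (qfun n ε)
      (-(((n:ℝ)+1)/n * ((n:ℝ) * (1 - ρ/ε^2)^(n-1) * (-(1/ε^2))))
        - ∑ k ∈ Finset.Icc 1 (n-1), (1/(k:ℝ)) * ((k:ℝ) * (1 - ρ/ε^2)^(k-1) * (-(1/ε^2)))) ρ := by
    unfold qfun
    exact (((hpow n).const_mul (((n:ℝ)+1)/n)).const_sub (Real.log (ε^2))).sub hsum
  convert h1 using 1
  have hterm : ∀ k ∈ Finset.Icc 1 (n-1),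
      (1/(k:ℝ)) * ((k:ℝ) * (1 - ρ/ε^2)^(k-1) * (-(1/ε^2)))
        = -((1 - ρ/ε^2)^(k-1) / ε^2) := by
    intro k hk
    have hk1 : 1 ≤ k := (Finset.mem_Icc.mp hk).1
    have hk0 : (k:ℝ) ≠ 0 := Nat.cast_ne_zero.mpr (by omega)
    field_simp
  rw [Finset.sum_congr rfl hterm, Finset.sum_neg_distrib, ← Finset.sum_div]
  field_simp
  ring

lemma qfun_at_eps (n : ℕ) (hn : 1 ≤ n) (ε : ℝ) (hε : 0 < ε) :
    qfun n ε (ε^2) = Real.log (ε^2) := by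
  have hε2 : (ε^2) ≠ 0 := by positivity
  unfold qfun
  rw [div_self hε2]
  simp only [sub_self]
  rw [zero_pow (by omega : n ≠ 0)]
  have : ∀ k ∈ Finset.Icc 1 (n-1), (1/(k:ℝ)) * (0:ℝ)^k = 0 := by
    intro k hk
    have hk1 : 1 ≤ k := (Finset.mem_Icc.mp hk).1
    rw [zero_pow (by omega : k ≠ 0)]
    ring
  rw [Finset.sum_congr rfl this, Finset.sum_const_zero]
  ring

lemma freg_hasDerivAt_junction (n : ℕ) (hn : 2 ≤ n) (ε : ℝ) (hε : 0 < ε) :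
    HasDerivAt (freg n ε) (1/ε^2) (ε^2) := by
  have hε2 : (ε^2) ≠ 0 := by positivity
  -- the derivative of qfun at ε² is 1/ε²
  have hq' : ((((n:ℝ)+1) * (1 - (ε^2)/ε^2)^(n-1)
        + ∑ k ∈ Finset.Icc 1 (n-1), (1 - (ε^2)/ε^2)^(k-1)) / ε^2) = 1/ε^2 := by
    rw [div_self hε2, sub_self]
    rw [zero_pow (by omega : n - 1 ≠ 0)]
    have hsum : (∑ k ∈ Finset.Icc 1 (n-1), (0:ℝ)^(k-1)) = 1 := by
      rw [Finset.sum_eq_single 1]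
      · norm_num
      · intro k hk hk1
        have h1 : 1 ≤ k := (Finset.mem_Icc.mp hk).1
        rw [zero_pow (by omega : k - 1 ≠ 0)]
      · intro h
        exact absurd (Finset.mem_Icc.mpr ⟨le_refl 1, by omega⟩) h
    rw [hsum]
    ring
  have hlog : HasDerivWithinAt (freg n ε) (1/ε^2) (Set.Ici (ε^2)) (ε^2) := by
    have h := (Real.hasDerivAt_log hε2).hasDerivWithinAt (s := Set.Ici (ε^2))
    rw [show (ε^2)⁻¹ = 1/ε^2 by rw [one_div]] at h
    refine h.congr ?_ ?_
    · intro y hy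
      exact if_pos hy
    · exact if_pos (le_refl _)
  have hq : HasDerivWithinAt (freg n ε) (1/ε^2) (Set.Iic (ε^2)) (ε^2) := by
    have h := ((qfun_hasDerivAt n (by omega) ε hε (ε^2)).hasDerivWithinAt
      (s := Set.Iic (ε^2)))
    rw [hq'] at h
    refine h.congr ?_ ?_
    · intro y hy
      rcases lt_or_eq_of_le (Set.mem_Iic.mp hy) with h' | h'
      · exact if_neg (not_le.mpr h')
      · rw [h']
        rw [show freg n ε (ε^2) = Real.log (ε^2) from if_pos (le_refl _)]
        rw [qfun_at_eps n (by omega) ε hε]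
    · rw [show freg n ε (ε^2) = Real.log (ε^2) from if_pos (le_refl _)]
      rw [qfun_at_eps n (by omega) ε hε]
  have h2 : HasDerivWithinAt (freg n ε) (1/ε^2) Set.univ (ε^2) := by
    have h3 := hq.union hlog
    rwa [Set.Iic_union_Ici] at h3
  rw [← hasDerivWithinAt_univ]
  exact h2
/-- For `n ≥ 2`, `ε > 0`, the function `g(ρ) = ρ (f_n^ε)'(ρ)` satisfies
`0 ≤ g(ρ) ≤ 3` for all `ρ ≥ 0`. -/
theorem stmt7 (n : ℕ) (hn : 2 ≤ n) (ε : ℝ) (hε : 0 < ε) :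
    ∀ ρ : ℝ, 0 ≤ ρ →
      0 ≤ ρ * deriv (freg n ε) ρ ∧ ρ * deriv (freg n ε) ρ ≤ 3 := by
  intro ρ hρ
  have hε2 : (0:ℝ) < ε^2 := by positivity
  rcases eq_or_lt_of_le hρ with h0 | h0
  · rw [← h0]; norm_num
  rcases lt_trichotomy ρ (ε^2) with hlt | heq | hgt
  · -- 0 < ρ < ε²
    have hev : freg n ε =ᶠ[nhds ρ] qfun n ε := by
      filter_upwards [isOpen_Iio.mem_nhds (show ρ ∈ Set.Iio (ε^2) from hlt)] with x hx
      exact if_neg (not_le.mpr hx)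
    have hd : deriv (freg n ε) ρ
        = (((n:ℝ)+1) * (1 - ρ/ε^2)^(n-1)
            + ∑ k ∈ Finset.Icc 1 (n-1), (1 - ρ/ε^2)^(k-1)) / ε^2 := by
      rw [hev.deriv_eq, (qfun_hasDerivAt n (by omega) ε hε ρ).deriv]
    rw [hd]
    set u : ℝ := ρ / ε^2 with hu
    have hu0 : 0 < u := div_pos h0 hε2
    have hu1 : u < 1 := (div_lt_one hε2).mpr hlt
    have hρu : ρ = u * ε^2 := by rw [hu, div_mul_cancel₀ _ (ne_of_gt hε2)]
    set S : ℝ := ∑ k ∈ Finset.Icc 1 (n-1), (1 - u)^(k-1) with hS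
    set P : ℝ := (1 - u)^(n-1) with hP
    have hval : ρ * ((((n:ℝ)+1) * P + S) / ε^2) = ((n:ℝ)+1) * u * P + u * S := by
      rw [hρu]; field_simp
    -- geometric sum identity
    have hgeom : u * S = 1 - P := by
      have hre : S = ∑ i ∈ Finset.range (n-1), (1-u)^i := by
        rw [hS, show Finset.Icc 1 (n-1) = Finset.Ico 1 n by
          rw [← Finset.Ico_add_one_right_eq_Icc]; congr 1; omega]
        rw [Finset.sum_Ico_eq_sum_range]
        apply Finset.sum_congr rfl
        intro i _
        congr 1
        omega
      have hg := geom_sum_mul (1-u) (n-1)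
      rw [hre]
      have : (∑ i ∈ Finset.range (n-1), (1-u)^i) * ((1-u) - 1) = (1-u)^(n-1) - 1 := hg
      rw [hP]
      nlinarith [this]
    have hP0 : 0 ≤ P := pow_nonneg (by linarith) _
    have hP1 : P ≤ 1 := pow_le_one₀ (by linarith) (by linarith)
    have hA := aux_pow (n-1) u (le_of_lt hu0) (le_of_lt hu1)
    have hcast : ((n-1 : ℕ) : ℝ) = (n:ℝ) - 1 := by
      push_cast [Nat.cast_sub (by omega : 1 ≤ n)]; ring
    rw [hcast] at hA
    rw [← hP] at hA
    have hn2 : (2:ℝ) ≤ (n:ℝ) := by exact_mod_cast hn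
    constructor
    · rw [hval, hgeom]
      nlinarith [mul_nonneg (mul_nonneg (by linarith : (0:ℝ) ≤ (n:ℝ)+1) hu0.le) hP0]
    · rw [hval, hgeom]
      nlinarith [mul_nonneg hu0.le hP0, mul_nonneg (mul_nonneg hu0.le hu0.le) hP0]
  · -- ρ = ε²
    rw [heq, (freg_hasDerivAt_junction n hn ε hε).deriv]
    rw [mul_one_div, div_self (ne_of_gt hε2)]
    norm_num
  · -- ρ > ε²
    have hev : freg n ε =ᶠ[nhds ρ] Real.log := by
      filter_upwards [isOpen_Ioi.mem_nhds (show ρ ∈ Set.Ioi (ε^2) from hgt)] with x hx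
      exact if_pos (le_of_lt hx)
    rw [hev.deriv_eq, Real.deriv_log, mul_inv_cancel₀ (ne_of_gt h0)]
    norm_num
end

section
/- Let n ≥ 2 be an integer and ε > 0. With f_n^ε as in the LER construction, for all ρ ≥ 0 one has √ρ·|(f_n^ε)'(ρ)| ≤ 2n/ε. -/
open Real Complex

noncomputable def Dq (n : ℕ) (ε ρ : ℝ) : ℝ :=
  ((n : ℝ) + 1) / ε ^ 2 * (1 - ρ / ε ^ 2) ^ (n - 1)
    + (∑ k ∈ Finset.Icc 1 (n - 1), (1 - ρ / ε ^ 2) ^ (k - 1)) / ε ^ 2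

lemma qfun_hasDerivAt_s8 (n : ℕ) (hn : 2 ≤ n) (ε : ℝ) (hε : 0 < ε) (ρ : ℝ) :
    HasDerivAt (qfun n ε) (Dq n ε ρ) ρ := by
  have hε2 : (ε ^ 2) ≠ 0 := by positivity
  have hn0 : (n : ℝ) ≠ 0 := by positivity
  have h1 : HasDerivAt (fun x : ℝ => 1 - x / ε ^ 2) (-(1 / ε ^ 2)) ρ := by
    simpa using ((hasDerivAt_id ρ).div_const (ε ^ 2)).const_sub 1
  have h2 : HasDerivAt (fun x => ((n + 1 : ℝ) / n) * (1 - x / ε ^ 2) ^ n)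
      (((n + 1 : ℝ) / n) * ((n : ℝ) * (1 - ρ / ε ^ 2) ^ (n - 1) * (-(1 / ε ^ 2)))) ρ :=
    (h1.pow n).const_mul _
  have h3 : ∀ k ∈ Finset.Icc 1 (n - 1),
      HasDerivAt (fun x => (1 / (k : ℝ)) * (1 - x / ε ^ 2) ^ k)
        ((1 / (k : ℝ)) * ((k : ℝ) * (1 - ρ / ε ^ 2) ^ (k - 1) * (-(1 / ε ^ 2)))) ρ :=
    fun k _ => (h1.pow k).const_mul _
  have h4 := ((hasDerivAt_const ρ (Real.log (ε ^ 2))).sub h2).sub (HasDerivAt.fun_sum h3)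
  have hsum : ∑ k ∈ Finset.Icc 1 (n - 1),
      (1 / (k : ℝ)) * ((k : ℝ) * (1 - ρ / ε ^ 2) ^ (k - 1) * (-(1 / ε ^ 2)))
      = -((∑ k ∈ Finset.Icc 1 (n - 1), (1 - ρ / ε ^ 2) ^ (k - 1)) / ε ^ 2) := by
    rw [Finset.sum_div, ← Finset.sum_neg_distrib]
    apply Finset.sum_congr rfl
    intro k hk
    have hk1 : 1 ≤ k := (Finset.mem_Icc.mp hk).1
    have hk0 : (k : ℝ) ≠ 0 := by positivity
    generalize (1 - ρ / ε ^ 2) ^ (k - 1) = t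
    field_simp
  convert h4 using 1
  case e'_4 => rfl
  case e'_5 => rfl
  case e'_8 => rfl
  rw [hsum]
  unfold Dq
  generalize (1 - ρ / ε ^ 2) ^ (n - 1) = P
  generalize (∑ k ∈ Finset.Icc 1 (n - 1), (1 - ρ / ε ^ 2) ^ (k - 1)) = S
  field_simp
  ring

lemma Dq_nonneg (n : ℕ) (ε : ℝ) (hε : 0 < ε) (ρ : ℝ) (hρ : ρ ≤ ε ^ 2) :
    0 ≤ Dq n ε ρ := by
  have ht : 0 ≤ 1 - ρ / ε ^ 2 := by
    have : ρ / ε ^ 2 ≤ 1 := (div_le_one (by positivity)).mpr hρ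
    linarith
  unfold Dq
  have h1 : (0:ℝ) ≤ ((n : ℝ) + 1) / ε ^ 2 * (1 - ρ / ε ^ 2) ^ (n - 1) := by positivity
  have h2 : (0:ℝ) ≤ (∑ k ∈ Finset.Icc 1 (n - 1), (1 - ρ / ε ^ 2) ^ (k - 1)) / ε ^ 2 := by
    apply div_nonneg _ (by positivity)
    exact Finset.sum_nonneg fun k _ => pow_nonneg ht _
  linarith

lemma Dq_le (n : ℕ) (hn : 2 ≤ n) (ε : ℝ) (hε : 0 < ε) (ρ : ℝ) (hρ0 : 0 ≤ ρ)
    (hρ : ρ ≤ ε ^ 2) : Dq n ε ρ ≤ 2 * n / ε ^ 2 := by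
  have ht : 0 ≤ 1 - ρ / ε ^ 2 := by
    have : ρ / ε ^ 2 ≤ 1 := (div_le_one (by positivity)).mpr hρ
    linarith
  have ht1 : 1 - ρ / ε ^ 2 ≤ 1 := by
    have : 0 ≤ ρ / ε ^ 2 := by positivity
    linarith
  have hp : ∀ m : ℕ, (1 - ρ / ε ^ 2) ^ m ≤ 1 := fun m => pow_le_one₀ ht ht1
  have h1 : ((n : ℝ) + 1) / ε ^ 2 * (1 - ρ / ε ^ 2) ^ (n - 1) ≤ ((n : ℝ) + 1) / ε ^ 2 := by
    have := hp (n - 1)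
    have h0 : (0:ℝ) ≤ ((n : ℝ) + 1) / ε ^ 2 := by positivity
    nlinarith
  have h2 : (∑ k ∈ Finset.Icc 1 (n - 1), (1 - ρ / ε ^ 2) ^ (k - 1)) ≤ ((n : ℝ) - 1) := by
    calc (∑ k ∈ Finset.Icc 1 (n - 1), (1 - ρ / ε ^ 2) ^ (k - 1))
        ≤ ∑ _k ∈ Finset.Icc 1 (n - 1), (1:ℝ) := Finset.sum_le_sum fun k _ => hp _
      _ = ((n - 1 : ℕ) : ℝ) := by simp
      _ = (n : ℝ) - 1 := by rw [Nat.cast_sub (by omega)]; simp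
  have h2' : (∑ k ∈ Finset.Icc 1 (n - 1), (1 - ρ / ε ^ 2) ^ (k - 1)) / ε ^ 2
      ≤ ((n : ℝ) - 1) / ε ^ 2 := by gcongr
  have hfin : ((n : ℝ) + 1) / ε ^ 2 + ((n : ℝ) - 1) / ε ^ 2 = 2 * n / ε ^ 2 := by ring
  unfold Dq
  linarith

lemma Dq_eps (n : ℕ) (hn : 2 ≤ n) (ε : ℝ) (hε : 0 < ε) :
    Dq n ε (ε ^ 2) = 1 / ε ^ 2 := by
  have hε2 : (ε ^ 2) ≠ 0 := by positivity
  have ht : 1 - ε ^ 2 / ε ^ 2 = 0 := by rw [div_self hε2]; ring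
  unfold Dq
  rw [ht]
  rw [zero_pow (by omega : n - 1 ≠ 0), mul_zero, zero_add]
  congr 1
  rw [Finset.sum_eq_single_of_mem 1 (Finset.mem_Icc.mpr ⟨le_refl 1, by omega⟩)]
  · norm_num
  · intro k hk hk1
    have := (Finset.mem_Icc.mp hk).1
    exact zero_pow (by omega)

lemma qfun_eps (n : ℕ) (hn : 2 ≤ n) (ε : ℝ) (hε : 0 < ε) :
    qfun n ε (ε ^ 2) = Real.log (ε ^ 2) := by
  have hε2 : (ε ^ 2) ≠ 0 := by positivity
  have ht : 1 - ε ^ 2 / ε ^ 2 = 0 := by rw [div_self hε2]; ring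
  unfold qfun
  rw [ht, zero_pow (by omega : n ≠ 0)]
  rw [Finset.sum_eq_zero (fun k hk => ?_)]
  · ring
  · have := (Finset.mem_Icc.mp hk).1
    rw [zero_pow (by omega : k ≠ 0), mul_zero]

lemma freg_eqOn_Iic (n : ℕ) (hn : 2 ≤ n) (ε : ℝ) (hε : 0 < ε) :
    Set.EqOn (freg n ε) (qfun n ε) (Set.Iic (ε ^ 2)) := by
  intro x hx
  rcases lt_or_eq_of_le (Set.mem_Iic.mp hx) with h | h
  · exact if_neg (not_le.mpr h)
  · rw [h, freg, if_pos le_rfl, qfun_eps n hn ε hε]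

lemma freg_hasDerivAt_le (n : ℕ) (hn : 2 ≤ n) (ε : ℝ) (hε : 0 < ε) (ρ : ℝ)
    (hρ : ρ ≤ ε ^ 2) : HasDerivAt (freg n ε) (Dq n ε ρ) ρ := by
  rcases lt_or_eq_of_le hρ with h | h
  · apply (qfun_hasDerivAt_s8 n hn ε hε ρ).congr_of_eventuallyEq
    filter_upwards [Iio_mem_nhds h] with x hx
    exact if_neg (not_le.mpr hx)
  · subst h
    rw [Dq_eps n hn ε hε]
    have hlog : HasDerivWithinAt (freg n ε) (1 / ε ^ 2) (Set.Ici (ε ^ 2)) (ε ^ 2) := by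
      have := (Real.hasDerivAt_log (show (ε ^ 2) ≠ 0 by positivity)).hasDerivWithinAt
        (s := Set.Ici (ε ^ 2))
      rw [show (ε ^ 2)⁻¹ = 1 / ε ^ 2 by rw [one_div]] at this
      exact this.congr (fun x hx => if_pos hx) (if_pos le_rfl)
    have hq : HasDerivWithinAt (freg n ε) (1 / ε ^ 2) (Set.Iic (ε ^ 2)) (ε ^ 2) := by
      have := (qfun_hasDerivAt_s8 n hn ε hε (ε ^ 2)).hasDerivWithinAt (s := Set.Iic (ε ^ 2))
      rw [Dq_eps n hn ε hε] at this
      exact this.congr (freg_eqOn_Iic n hn ε hε) (freg_eqOn_Iic n hn ε hε Set.self_mem_Iic)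
    have := hq.union hlog
    rw [Set.Iic_union_Ici] at this
    exact hasDerivWithinAt_univ.mp this

/-- For `n ≥ 2`, `ε > 0` and all `ρ ≥ 0`, `√ρ |(f_n^ε)'(ρ)| ≤ 2n/ε`. -/
theorem stmt8 (n : ℕ) (hn : 2 ≤ n) (ε : ℝ) (hε : 0 < ε) :
    ∀ ρ : ℝ, 0 ≤ ρ →
      Real.sqrt ρ * |deriv (freg n ε) ρ| ≤ 2 * n / ε := by
  intro ρ hρ0
  have hε2 : (0:ℝ) < ε ^ 2 := by positivity
  have hn1 : (1:ℝ) ≤ 2 * n := by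
    have : (2:ℝ) ≤ (n:ℝ) := by exact_mod_cast hn
    linarith
  rcases le_or_gt ρ (ε ^ 2) with h | h
  · have hD := (freg_hasDerivAt_le n hn ε hε ρ h).deriv
    rw [hD, _root_.abs_of_nonneg (Dq_nonneg n ε hε ρ h)]
    have hs : Real.sqrt ρ ≤ ε := by
      calc Real.sqrt ρ ≤ Real.sqrt (ε ^ 2) := Real.sqrt_le_sqrt h
        _ = ε := Real.sqrt_sq hε.le
    calc Real.sqrt ρ * Dq n ε ρ ≤ ε * (2 * n / ε ^ 2) := by
          apply mul_le_mul hs (Dq_le n hn ε hε ρ hρ0 h) (Dq_nonneg n ε hε ρ h) hε.le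
      _ = 2 * n / ε := by field_simp
  · have hρpos : 0 < ρ := lt_trans hε2 h
    have hD : deriv (freg n ε) ρ = ρ⁻¹ := by
      apply HasDerivAt.deriv
      apply (Real.hasDerivAt_log hρpos.ne').congr_of_eventuallyEq
      filter_upwards [Ioi_mem_nhds h] with x hx
      exact if_pos (le_of_lt hx)
    rw [hD, _root_.abs_of_nonneg (inv_nonneg.mpr hρpos.le)]
    have hsq : 0 < Real.sqrt ρ := Real.sqrt_pos.mpr hρpos
    have key : Real.sqrt ρ * ρ⁻¹ = 1 / Real.sqrt ρ := by
      rw [← Real.sqrt_mul_self hρpos.le]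
      field_simp
      rw [Real.sq_sqrt (Real.sqrt_nonneg _)]
    rw [key]
    have hεs : ε ≤ Real.sqrt ρ := by
      calc ε = Real.sqrt (ε ^ 2) := (Real.sqrt_sq hε.le).symm
        _ ≤ Real.sqrt ρ := Real.sqrt_le_sqrt h.le
    calc 1 / Real.sqrt ρ ≤ 1 / ε := one_div_le_one_div_of_le hε hεs
      _ ≤ 2 * n / ε := by gcongr
end

section
/- Let n ≥ 3 be an integer and ε > 0. With f_n^ε as in the LER construction, for all ρ ≥ 0 with ρ ≠ ε², one has ρ^{3/2}·|(f_n^ε)''(ρ)| ≤ 3n²/(2ε). -/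
open Real Complex

/-- First derivative of `qfun`. -/
noncomputable def g1 (n : ℕ) (ε x : ℝ) : ℝ :=
  (ε ^ 2)⁻¹ * (((n : ℝ) + 1) * (1 - x / ε ^ 2) ^ (n - 1)
    + ∑ k ∈ Finset.Icc 1 (n - 1), (1 - x / ε ^ 2) ^ (k - 1))

/-- Second derivative of `qfun`. -/
noncomputable def g2 (n : ℕ) (ε x : ℝ) : ℝ :=
  (ε ^ 2)⁻¹ * (((n : ℝ) + 1) * ((↑(n - 1) : ℝ) * (1 - x / ε ^ 2) ^ (n - 1 - 1) * (-(ε ^ 2)⁻¹))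
    + ∑ k ∈ Finset.Icc 1 (n - 1),
        (↑(k - 1) : ℝ) * (1 - x / ε ^ 2) ^ (k - 1 - 1) * (-(ε ^ 2)⁻¹))

lemma hu_deriv (ε : ℝ) (ρ : ℝ) :
    HasDerivAt (fun x : ℝ => 1 - x / ε ^ 2) (-(ε ^ 2)⁻¹) ρ := by
  simpa [one_div] using ((hasDerivAt_id ρ).div_const (ε ^ 2)).const_sub 1

lemma qfun_hasDeriv (n : ℕ) (hn : 3 ≤ n) (ε : ℝ) (hε : ε ≠ 0) (ρ : ℝ) :
    HasDerivAt (qfun n ε) (g1 n ε ρ) ρ := by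
  have hn0 : (n : ℝ) ≠ 0 := Nat.cast_ne_zero.mpr (by omega)
  have hu := hu_deriv ε ρ
  have hB : HasDerivAt (fun x : ℝ => ((n : ℝ) + 1) / n * (1 - x / ε ^ 2) ^ n)
      (((n : ℝ) + 1) / n * ((n : ℝ) * (1 - ρ / ε ^ 2) ^ (n - 1) * (-(ε ^ 2)⁻¹))) ρ :=
    (hu.pow n).const_mul _
  have hC : HasDerivAt
      (fun x : ℝ => ∑ k ∈ Finset.Icc 1 (n - 1), (1 / (k : ℝ)) * (1 - x / ε ^ 2) ^ k)
      (∑ k ∈ Finset.Icc 1 (n - 1),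
        (1 / (k : ℝ)) * ((k : ℝ) * (1 - ρ / ε ^ 2) ^ (k - 1) * (-(ε ^ 2)⁻¹))) ρ :=
    HasDerivAt.fun_sum fun k _ => (hu.pow k).const_mul _
  have h := ((hasDerivAt_const ρ (Real.log (ε ^ 2))).fun_sub hB).fun_sub hC
  have hsum : ∑ k ∈ Finset.Icc 1 (n - 1),
      (1 / (k : ℝ)) * ((k : ℝ) * (1 - ρ / ε ^ 2) ^ (k - 1) * (-(ε ^ 2)⁻¹))
      = (∑ k ∈ Finset.Icc 1 (n - 1), (1 - ρ / ε ^ 2) ^ (k - 1)) * (-(ε ^ 2)⁻¹) := by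
    rw [Finset.sum_mul]
    refine Finset.sum_congr rfl fun k hk => ?_
    have hk0 : (k : ℝ) ≠ 0 := Nat.cast_ne_zero.mpr (by
      have := (Finset.mem_Icc.mp hk).1; omega)
    field_simp
  refine h.congr_deriv ?_
  rw [hsum, g1]
  field_simp
  ring

lemma g1_hasDeriv (n : ℕ) (ε : ℝ) (ρ : ℝ) :
    HasDerivAt (g1 n ε) (g2 n ε ρ) ρ := by
  have hu := hu_deriv ε ρ
  have h1 : HasDerivAt (fun x : ℝ => ((n : ℝ) + 1) * (1 - x / ε ^ 2) ^ (n - 1))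
      (((n : ℝ) + 1) * ((↑(n - 1) : ℝ) * (1 - ρ / ε ^ 2) ^ (n - 1 - 1) * (-(ε ^ 2)⁻¹))) ρ :=
    (hu.pow (n - 1)).const_mul _
  have h2 : HasDerivAt
      (fun x : ℝ => ∑ k ∈ Finset.Icc 1 (n - 1), (1 - x / ε ^ 2) ^ (k - 1))
      (∑ k ∈ Finset.Icc 1 (n - 1),
        (↑(k - 1) : ℝ) * (1 - ρ / ε ^ 2) ^ (k - 1 - 1) * (-(ε ^ 2)⁻¹)) ρ :=
    HasDerivAt.fun_sum fun k _ => hu.pow (k - 1)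
  exact (h1.add h2).const_mul _

/-- For `n ≥ 3`, `ε > 0` and all `ρ ≥ 0` with `ρ ≠ ε²`,
`ρ^{3/2} |(f_n^ε)''(ρ)| ≤ 3n²/(2ε)`. -/
theorem stmt9 (n : ℕ) (hn : 3 ≤ n) (ε : ℝ) (hε : 0 < ε) :
    ∀ ρ : ℝ, 0 ≤ ρ → ρ ≠ ε ^ 2 →
      ρ ^ ((3 : ℝ) / 2) * |deriv (deriv (freg n ε)) ρ| ≤ 3 * n ^ 2 / (2 * ε) := by
  intro ρ hρ hne
  have hε2 : (0:ℝ) < ε ^ 2 := by positivity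
  have hn1 : (1:ℝ) ≤ (n:ℝ) := by exact_mod_cast (by omega : 1 ≤ n)
  rcases hne.lt_or_gt with hlt | hgt
  · -- ρ < ε² : polynomial region
    have hev : deriv (freg n ε) =ᶠ[nhds ρ] g1 n ε := by
      filter_upwards [Iio_mem_nhds hlt] with x hx
      have hfx : freg n ε =ᶠ[nhds x] qfun n ε := by
        filter_upwards [Iio_mem_nhds hx] with y hy
        simp only [freg, if_neg (not_le.mpr (Set.mem_Iio.mp hy))]
      rw [hfx.deriv_eq, (qfun_hasDeriv n hn ε hε.ne' x).deriv]
    have hd2 : deriv (deriv (freg n ε)) ρ = g2 n ε ρ := by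
      rw [hev.deriv_eq, (g1_hasDeriv n ε ρ).deriv]
    rw [hd2]
    set u : ℝ := 1 - ρ / ε ^ 2 with hu_def
    have hu0 : 0 ≤ u := by
      have h : ρ / ε ^ 2 ≤ 1 := (div_le_one hε2).mpr hlt.le
      show (0:ℝ) ≤ 1 - ρ / ε ^ 2
      linarith
    have hu1 : u ≤ 1 := by
      have h : 0 ≤ ρ / ε ^ 2 := by positivity
      show (1:ℝ) - ρ / ε ^ 2 ≤ 1
      linarith
    have hpow : ∀ m : ℕ, u ^ m ≤ 1 := fun m => pow_le_one₀ hu0 hu1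
    have hpow0 : ∀ m : ℕ, 0 ≤ u ^ m := fun m => pow_nonneg hu0 m
    -- rewrite |g2|
    have habs : |g2 n ε ρ| = (ε ^ 2)⁻¹ * (ε ^ 2)⁻¹ *
        (((n : ℝ) + 1) * ((↑(n - 1) : ℝ) * u ^ (n - 1 - 1))
          + ∑ k ∈ Finset.Icc 1 (n - 1), (↑(k - 1) : ℝ) * u ^ (k - 1 - 1)) := by
      have hg2 : g2 n ε ρ = -((ε ^ 2)⁻¹ * (ε ^ 2)⁻¹ *
          (((n : ℝ) + 1) * ((↑(n - 1) : ℝ) * u ^ (n - 1 - 1))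
            + ∑ k ∈ Finset.Icc 1 (n - 1), (↑(k - 1) : ℝ) * u ^ (k - 1 - 1))) := by
        rw [g2, ← Finset.sum_mul]
        ring
      rw [hg2, abs_neg, _root_.abs_of_nonneg]
      have : 0 ≤ ((n : ℝ) + 1) * ((↑(n - 1) : ℝ) * u ^ (n - 1 - 1)) := by positivity
      have hs : 0 ≤ ∑ k ∈ Finset.Icc 1 (n - 1), (↑(k - 1) : ℝ) * u ^ (k - 1 - 1) :=
        Finset.sum_nonneg fun k _ => by positivity
      positivity
    -- the bracket is at most 3n²/2
    have hm1 : ((n - 1 : ℕ) : ℝ) = (n : ℝ) - 1 := by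
      rw [Nat.cast_sub (by omega : 1 ≤ n)]; norm_num
    have hScast : (∑ k ∈ Finset.Icc 1 (n - 1), (↑(k - 1) : ℝ)) * 2
        = ((n : ℝ) - 1) * ((n : ℝ) - 2) := by
      have e1 : ∑ k ∈ Finset.Icc 1 (n - 1), (↑(k - 1) : ℝ)
          = ∑ i ∈ Finset.range (n - 1), (i : ℝ) := by
        have hIc : Finset.Icc 1 (n - 1) = Finset.Ico 1 n := by
          rw [← Finset.Ico_add_one_right_eq_Icc]
          congr 1
          omega
        rw [hIc, Finset.sum_Ico_eq_sum_range]
        simp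
      rw [e1, ← Nat.cast_sum]
      have h2 := congrArg (Nat.cast : ℕ → ℝ) (Finset.sum_range_id_mul_two (n - 1))
      have e2 : n - 1 - 1 = n - 2 := by omega
      rw [e2] at h2
      push_cast at h2
      rw [hm1, Nat.cast_sub (by omega : 2 ≤ n)] at h2
      push_cast at h2 ⊢
      linarith [h2]
    have hbr : ((n : ℝ) + 1) * ((↑(n - 1) : ℝ) * u ^ (n - 1 - 1))
        + ∑ k ∈ Finset.Icc 1 (n - 1), (↑(k - 1) : ℝ) * u ^ (k - 1 - 1)
        ≤ 3 * (n : ℝ) ^ 2 / 2 := by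
      have hb1 : ((n : ℝ) + 1) * ((↑(n - 1) : ℝ) * u ^ (n - 1 - 1))
          ≤ ((n : ℝ) + 1) * (↑(n - 1) : ℝ) := by
        have : (↑(n - 1) : ℝ) * u ^ (n - 1 - 1) ≤ (↑(n - 1) : ℝ) * 1 :=
          mul_le_mul_of_nonneg_left (hpow _) (by positivity)
        nlinarith [this]
      have hb2 : ∑ k ∈ Finset.Icc 1 (n - 1), (↑(k - 1) : ℝ) * u ^ (k - 1 - 1)
          ≤ ∑ k ∈ Finset.Icc 1 (n - 1), (↑(k - 1) : ℝ) :=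
        Finset.sum_le_sum fun k _ => by
          calc (↑(k - 1) : ℝ) * u ^ (k - 1 - 1) ≤ (↑(k - 1) : ℝ) * 1 :=
                mul_le_mul_of_nonneg_left (hpow _) (by positivity)
            _ = _ := mul_one _
      rw [hm1] at hb1 ⊢
      nlinarith [hScast, hb1, hb2]
    -- ρ^{3/2} ≤ ε³
    have hrpow : ρ ^ ((3:ℝ)/2) ≤ ε ^ 3 := by
      have h1 : ρ ^ ((3:ℝ)/2) ≤ (ε ^ 2) ^ ((3:ℝ)/2) :=
        Real.rpow_le_rpow hρ hlt.le (by norm_num)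
      have h2 : (ε ^ 2) ^ ((3:ℝ)/2) = ε ^ 3 := by
        rw [← Real.rpow_natCast ε 2, ← Real.rpow_mul hε.le, ← Real.rpow_natCast ε 3]
        norm_num
      linarith [h1, h2.le, h2.ge]
    have hrpow0 : 0 ≤ ρ ^ ((3:ℝ)/2) := Real.rpow_nonneg hρ _
    have habs0 : 0 ≤ |g2 n ε ρ| := abs_nonneg _
    calc ρ ^ ((3:ℝ)/2) * |g2 n ε ρ| ≤ ε ^ 3 * |g2 n ε ρ| :=
          mul_le_mul_of_nonneg_right hrpow habs0
      _ ≤ ε ^ 3 * ((ε ^ 2)⁻¹ * (ε ^ 2)⁻¹ * (3 * (n : ℝ) ^ 2 / 2)) := by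
          rw [habs]
          refine mul_le_mul_of_nonneg_left ?_ (by positivity)
          exact mul_le_mul_of_nonneg_left hbr (by positivity)
      _ = 3 * (n : ℝ) ^ 2 / (2 * ε) := by field_simp
  · -- ρ > ε² : log region
    have hρpos : 0 < ρ := lt_trans hε2 hgt
    have hev : deriv (freg n ε) =ᶠ[nhds ρ] fun x : ℝ => x⁻¹ := by
      filter_upwards [Ioi_mem_nhds hgt] with x hx
      have hfx : freg n ε =ᶠ[nhds x] Real.log := by
        filter_upwards [Ioi_mem_nhds hx] with y hy
        simp only [freg, if_pos (Set.mem_Ioi.mp hy).le]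
      rw [hfx.deriv_eq, Real.deriv_log]
    have hd2 : deriv (deriv (freg n ε)) ρ = -(ρ ^ 2)⁻¹ := by
      rw [hev.deriv_eq, deriv_inv]
    rw [hd2, abs_neg, abs_inv, _root_.abs_of_nonneg (sq_nonneg ρ)]
    -- ρ^{3/2} * ρ⁻² = ρ^{-1/2} ≤ 1/ε
    have key : ρ ^ ((3:ℝ)/2) * (ρ ^ 2)⁻¹ = ρ ^ (-(1:ℝ)/2) := by
      rw [← Real.rpow_natCast ρ 2, ← Real.rpow_neg hρpos.le,
        ← Real.rpow_add hρpos]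
      norm_num
    rw [key]
    have hsqrt : ε ≤ ρ ^ ((1:ℝ)/2) := by
      have h1 : (ε ^ 2) ^ ((1:ℝ)/2) ≤ ρ ^ ((1:ℝ)/2) :=
        Real.rpow_le_rpow hε2.le hgt.le (by norm_num)
      have h2 : (ε ^ 2) ^ ((1:ℝ)/2) = ε := by
        rw [← Real.rpow_natCast ε 2, ← Real.rpow_mul hε.le]
        norm_num
      linarith
    have hneg : ρ ^ (-(1:ℝ)/2) = (ρ ^ ((1:ℝ)/2))⁻¹ := by
      rw [← Real.rpow_neg hρpos.le]; norm_num
    rw [hneg]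
    have h1 : (ρ ^ ((1:ℝ)/2))⁻¹ ≤ ε⁻¹ :=
      inv_anti₀ hε hsqrt
    calc (ρ ^ ((1:ℝ)/2))⁻¹ ≤ ε⁻¹ := h1
      _ ≤ 3 * (n : ℝ) ^ 2 / (2 * ε) := by
          rw [div_eq_mul_inv, mul_inv]
          have : (1:ℝ) ≤ 3 * (n : ℝ) ^ 2 * (2:ℝ)⁻¹ := by nlinarith
          nlinarith [inv_nonneg.mpr hε.le, this]
end

section
/- Let Ω ⊂ ℝ^d be a measurable set of finite measure |Ω|, λ ∈ ℝ, n ≥ 2, 0 < ε ≤ 1, and u₀ : Ω → ℂ measurable. Then |∫_Ω λ(F(|u₀(x)|²) − F_n^ε(|u₀(x)|²)) dx| ≤ |λ|·|Ω|·ε², i.e., the regularized energy E_n^ε(u₀) converges quadratically in ε to the exact energy E(u₀). -/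
open Real Complex MeasureTheory

/-- The interaction energy density `F(ρ) = ρ ln ρ − ρ` (with `F(0) = 0`,
automatic since `Real.log 0 = 0`). -/
noncomputable def Fd (ρ : ℝ) : ℝ := ρ * Real.log ρ - ρ

/-- `Q_n^ε`, the degree-`n` Taylor polynomial of `ln ρ − 1` at `ρ = ε²`. -/
noncomputable def Qpoly (n : ℕ) (ε ρ : ℝ) : ℝ :=
  Real.log (ε ^ 2) - 1 - ∑ k ∈ Finset.Icc 1 n, (1 / (k : ℝ)) * (1 - ρ / ε ^ 2) ^ k

/-- The local energy regularization `F_n^ε`: equals `F` on `[ε², ∞)` and the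
degree-`(n+1)` polynomial `ρ Q_n^ε(ρ)` on `[0, ε²)`. -/
noncomputable def Freg (n : ℕ) (ε ρ : ℝ) : ℝ :=
  if ε ^ 2 ≤ ρ then Fd ρ else ρ * Qpoly n ε ρ

lemma Freg_key (n : ℕ) (ε : ℝ) (hε : 0 < ε) (ρ : ℝ) (hρ : 0 ≤ ρ) :
    |Fd ρ - Freg n ε ρ| ≤ ε ^ 2 := by
  have hε2 : (0:ℝ) < ε ^ 2 := by positivity
  rcases le_or_gt (ε ^ 2) ρ with h | h
  · simp [Freg, h, le_of_lt hε2]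
  rcases eq_or_lt_of_le hρ with h0 | h0
  · simp [Freg, not_le.2 h, Fd, ← h0, le_of_lt hε2]
  -- 0 < ρ < ε²
  set t : ℝ := ρ / ε ^ 2 with ht
  have ht0 : 0 < t := div_pos h0 hε2
  have ht1 : t < 1 := (div_lt_one hε2).2 h
  set x : ℝ := 1 - t with hx
  have hx0 : 0 < x := by simp [hx]; linarith
  have hx1 : x < 1 := by simp [hx]; linarith
  have habs : |x| < 1 := abs_lt.2 ⟨by linarith, hx1⟩
  set f : ℕ → ℝ := fun j => x ^ (j + 1) / (j + 1) with hf
  have h1 : HasSum f (-Real.log (1 - x)) :=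
    Real.hasSum_pow_div_log_of_abs_lt_one habs
  have h1x : (1 : ℝ) - x = t := by simp [hx]
  have hsumf : Summable f := h1.summable
  have htail : ∑ i ∈ Finset.range n, f i + ∑' i, f (i + n) = ∑' i, f i :=
    Summable.sum_add_tsum_nat_add n hsumf
  have htsum : ∑' i, f i = -Real.log t := by rw [h1.tsum_eq, h1x]
  -- the finite sum equals S
  have hS : ∑ k ∈ Finset.Icc 1 n, (1 / (k : ℝ)) * x ^ k =
      ∑ i ∈ Finset.range n, f i := by
    rw [← Finset.Ico_add_one_right_eq_Icc, Finset.sum_Ico_eq_sum_range]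
    apply Finset.sum_congr (by norm_num)
    intro i _
    simp only [hf]
    push_cast
    rw [div_eq_mul_inv, mul_comm, add_comm 1 (i:ℝ)]
    ring
  set R : ℝ := ∑' i, f (i + n) with hR
  have hRsum : Summable (fun i => f (i + n)) := hsumf.comp_injective (add_left_injective n)
  -- R nonneg
  have hfnn : ∀ j, 0 ≤ f j := fun j => by
    have : (0:ℝ) < (j:ℝ) + 1 := by positivity
    exact div_nonneg (pow_nonneg hx0.le _) this.le
  have hRnn : 0 ≤ R := tsum_nonneg (fun i => hfnn _)
  -- R ≤ x^(n+1)/((n+1) t)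
  have hgeo : Summable (fun i : ℕ => x ^ (n + 1) / (n + 1) * x ^ i) :=
    (summable_geometric_of_lt_one hx0.le hx1).mul_left _
  have hRle : R ≤ x ^ (n + 1) / (n + 1) * (1 - x)⁻¹ := by
    have hle : ∀ i, f (i + n) ≤ x ^ (n + 1) / (n + 1) * x ^ i := by
      intro i
      have h1 : x ^ (i + n + 1) = x ^ (n + 1) * x ^ i := by ring
      have h2 : (0:ℝ) < (n:ℝ) + 1 := by positivity
      have h3 : (n:ℝ) + 1 ≤ (i:ℝ) + n + 1 := by
        have : (0:ℝ) ≤ (i:ℝ) := Nat.cast_nonneg i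
        linarith
      calc f (i + n) = x ^ (i + n + 1) / ((i:ℝ) + n + 1) := by
            simp only [hf]; push_cast; ring_nf
        _ ≤ x ^ (i + n + 1) / ((n:ℝ) + 1) :=
            div_le_div_of_nonneg_left (pow_nonneg hx0.le _) h2 h3
        _ = x ^ (n + 1) / (n + 1) * x ^ i := by rw [h1]; ring
    calc R ≤ ∑' i, x ^ (n + 1) / (n + 1) * x ^ i := Summable.tsum_le_tsum hle hRsum hgeo
      _ = x ^ (n + 1) / (n + 1) * ∑' i : ℕ, x ^ i := tsum_mul_left
      _ = x ^ (n + 1) / (n + 1) * (1 - x)⁻¹ := by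
          rw [tsum_geometric_of_lt_one hx0.le hx1]
  -- main identity
  have hlogρ : Real.log ρ - Real.log (ε ^ 2) = Real.log t := by
    rw [ht, Real.log_div (ne_of_gt h0) (ne_of_gt hε2)]
  have hdiff : Fd ρ - Freg n ε ρ = ρ * (Real.log t + ∑ i ∈ Finset.range n, f i) := by
    simp only [Freg, not_le.2 h, if_false, Fd, Qpoly, ← hS, ← hx]
    rw [← hlogρ]; ring
  have hkey : Real.log t + ∑ i ∈ Finset.range n, f i = -R := by
    have := htail
    rw [htsum] at this
    linarith
  rw [hdiff, hkey]
  have hρt : ρ = ε ^ 2 * t := by rw [ht]; field_simp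
  have habs2 : |ρ * -R| = ρ * R := by
    rw [abs_of_nonpos (by nlinarith)]; ring
  rw [habs2, hρt]
  have hxn : x ^ (n + 1) ≤ 1 := pow_le_one₀ hx0.le hx1.le
  have hn1 : (1:ℝ) ≤ (n:ℝ) + 1 := by
    have : (0:ℝ) ≤ (n:ℝ) := Nat.cast_nonneg n; linarith
  calc ε ^ 2 * t * R ≤ ε ^ 2 * t * (x ^ (n + 1) / (n + 1) * (1 - x)⁻¹) := by
        apply mul_le_mul_of_nonneg_left hRle (by positivity)
    _ = ε ^ 2 * (x ^ (n + 1) / (n + 1)) := by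
        rw [h1x]; field_simp
    _ ≤ ε ^ 2 * 1 := by
        apply mul_le_mul_of_nonneg_left _ hε2.le
        rw [div_le_one (by positivity)]
        exact hxn.trans hn1
    _ = ε ^ 2 := mul_one _

/-- Quadratic convergence of the regularized energy on a finite-measure domain:
`|∫_Ω λ(F(|u₀|²) − F_n^ε(|u₀|²))| ≤ |λ| |Ω| ε²`. -/
theorem stmt12 (d : ℕ) (Ω : Set (Fin d → ℝ)) (hΩ : MeasurableSet Ω)
    (hΩfin : volume Ω < ⊤) (lam : ℝ) (n : ℕ) (hn : 2 ≤ n)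
    (ε : ℝ) (hε : 0 < ε) (hε1 : ε ≤ 1) (u₀ : (Fin d → ℝ) → ℂ)
    (hu : Measurable u₀) :
    |∫ x in Ω, lam * (Fd (‖u₀ x‖ ^ 2) - Freg n ε (‖u₀ x‖ ^ 2))| ≤
      |lam| * (volume Ω).toReal * ε ^ 2 := by
  have hfin : IsFiniteMeasure (volume.restrict Ω) :=
    ⟨by rwa [Measure.restrict_apply_univ]⟩
  have hbound : ∀ x, ‖Fd (‖u₀ x‖ ^ 2) - Freg n ε (‖u₀ x‖ ^ 2)‖ ≤ ε ^ 2 :=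
    fun x => Freg_key n ε hε _ (by positivity)
  calc |∫ x in Ω, lam * (Fd (‖u₀ x‖ ^ 2) - Freg n ε (‖u₀ x‖ ^ 2))|
      = |lam| * |∫ x in Ω, (Fd (‖u₀ x‖ ^ 2) - Freg n ε (‖u₀ x‖ ^ 2))| := by
        rw [integral_const_mul, abs_mul]
    _ ≤ |lam| * (ε ^ 2 * ((volume.restrict Ω) Set.univ).toReal) := by
        apply mul_le_mul_of_nonneg_left _ (abs_nonneg _)
        exact norm_integral_le_of_norm_le_const (Filter.Eventually.of_forall hbound)
    _ = |lam| * (volume Ω).toReal * ε ^ 2 := by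
        rw [Measure.restrict_apply_univ]; ring
end

section
/- Let 0 < α < 2, λ ∈ ℝ, n ≥ 2, ε > 0, and let u₀ : ℝ^d → ℂ be measurable with ∫ |u₀|^α < ∞. Then |∫ λ(F(|u₀(x)|²) − F_n^ε(|u₀(x)|²)) dx| ≤ |λ|·(∫|u₀|^α dx)·ε^{2−α}/(1 − α/2). -/
open Real Complex MeasureTheory

lemma sum_le_neg_log {t : ℝ} (ht0 : 0 ≤ t) (ht1 : t < 1) (n : ℕ) :
    ∑ k ∈ Finset.Icc 1 n, (1 / (k : ℝ)) * t ^ k ≤ -Real.log (1 - t) := by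
  have habs : |t| < 1 := by rwa [_root_.abs_of_nonneg ht0]
  have hs := hasSum_pow_div_log_of_abs_lt_one habs
  have h1 : ∑ k ∈ Finset.Icc 1 n, (1 / (k : ℝ)) * t ^ k
      = ∑ i ∈ Finset.range n, t ^ (i + 1) / (i + 1) := by
    rw [← Finset.Ico_add_one_right_eq_Icc, Finset.sum_Ico_eq_sum_range]
    refine Finset.sum_congr (by norm_num) fun i _ => ?_
    push_cast
    ring
  rw [h1]
  exact sum_le_hasSum _ (fun i _ => by positivity) hs

lemma pointwise_bound (n : ℕ) {ε : ℝ} (hε : 0 < ε) {ρ : ℝ} (hρ : 0 ≤ ρ)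
    {α : ℝ} (hα0 : 0 < α) (hα2 : α < 2) :
    |Fd ρ - Freg n ε ρ| ≤ ρ ^ (α / 2) * ε ^ ((2 : ℝ) - α) / (1 - α / 2) := by
  have hβ : (0:ℝ) < 1 - α / 2 := by linarith
  have hrhs : 0 ≤ ρ ^ (α / 2) * ε ^ ((2 : ℝ) - α) / (1 - α / 2) := by positivity
  by_cases hle : ε ^ 2 ≤ ρ
  · simp [Freg, hle, hrhs]
  · push_neg at hle
    rcases eq_or_lt_of_le hρ with h0 | h0
    · rw [← h0, Real.zero_rpow (div_pos hα0 two_pos).ne']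
      have hne : ¬ ε ^ 2 ≤ (0:ℝ) := not_le.2 (by positivity)
      simp [Freg, hne, Fd]
    -- here 0 < ρ < ε²
    have hε2 : (0:ℝ) < ε ^ 2 := by positivity
    set t : ℝ := 1 - ρ / ε ^ 2 with ht
    have ht0 : 0 ≤ t := by
      have : ρ / ε ^ 2 ≤ 1 := (div_le_one hε2).2 hle.le
      simp only [ht]; linarith
    have ht1 : t < 1 := by
      have : 0 < ρ / ε ^ 2 := div_pos h0 hε2
      simp only [ht]; linarith
    have h1t : 1 - t = ρ / ε ^ 2 := by simp [ht]
    have hlog : Real.log (1 - t) = Real.log ρ - Real.log (ε ^ 2) := by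
      rw [h1t, Real.log_div (ne_of_gt h0) (ne_of_gt hε2)]
    have hS0 : 0 ≤ ∑ k ∈ Finset.Icc 1 n, (1 / (k : ℝ)) * t ^ k := by
      apply Finset.sum_nonneg; intro k hk; positivity
    have hS1 := sum_le_neg_log ht0 ht1 n
    have hkey : Fd ρ - Freg n ε ρ
        = ρ * (Real.log (1 - t) + ∑ k ∈ Finset.Icc 1 n, (1 / (k : ℝ)) * t ^ k) := by
      rw [hlog]
      simp only [Freg, if_neg (not_le.2 hle), Fd, Qpoly, hlog, ht]
      ring
    rw [hkey, abs_mul, _root_.abs_of_nonneg hρ]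
    have habs : |Real.log (1 - t) + ∑ k ∈ Finset.Icc 1 n, (1 / (k : ℝ)) * t ^ k|
        ≤ Real.log (ε ^ 2) - Real.log ρ := by
      rw [abs_le]
      constructor
      · rw [hlog]; linarith
      · rw [hlog] at hS1 ⊢; linarith
    have step1 : ρ * |Real.log (1 - t) + ∑ k ∈ Finset.Icc 1 n, (1 / (k : ℝ)) * t ^ k|
        ≤ ρ * (Real.log (ε ^ 2) - Real.log ρ) :=
      mul_le_mul_of_nonneg_left habs hρ
    refine step1.trans ?_
    -- now bound ρ * log(ε²/ρ) ≤ ρ^{α/2} ε^{2-α}/(1-α/2)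
    have hu : (0:ℝ) < ε ^ 2 / ρ := div_pos hε2 h0
    have hlogu : Real.log (ε ^ 2) - Real.log ρ = Real.log (ε ^ 2 / ρ) := by
      rw [Real.log_div (ne_of_gt hε2) (ne_of_gt h0)]
    have hloglt : Real.log (ε ^ 2 / ρ) ≤ (ε ^ 2 / ρ) ^ (1 - α / 2) / (1 - α / 2) := by
      have h1 : Real.log ((ε ^ 2 / ρ) ^ (1 - α / 2)) = (1 - α / 2) * Real.log (ε ^ 2 / ρ) :=
        Real.log_rpow hu _
      have h2 : Real.log ((ε ^ 2 / ρ) ^ (1 - α / 2)) ≤ (ε ^ 2 / ρ) ^ (1 - α / 2) - 1 :=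
        Real.log_le_sub_one_of_pos (Real.rpow_pos_of_pos hu _)
      rw [h1] at h2
      rw [le_div_iff₀ hβ]
      nlinarith
    have he : (ε ^ 2 : ℝ) ^ (1 - α / 2) = ε ^ ((2:ℝ) - α) := by
      rw [← Real.rpow_natCast ε 2, ← Real.rpow_mul hε.le]
      norm_num
      ring_nf
    have hsplit : ρ ^ (α / 2) * ρ ^ (1 - α / 2) = ρ := by
      rw [← Real.rpow_add h0]
      norm_num
    have hρβ : (0:ℝ) < ρ ^ (1 - α / 2) := Real.rpow_pos_of_pos h0 _
    have hρpow : ρ * ((ε ^ 2 / ρ) ^ (1 - α / 2) / (1 - α / 2))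
        = ρ ^ (α / 2) * ε ^ ((2 : ℝ) - α) / (1 - α / 2) := by
      have hq : ρ / ρ ^ (1 - α / 2) = ρ ^ (α / 2) := by
        rw [div_eq_iff hρβ.ne']
        exact hsplit.symm
      rw [Real.div_rpow hε2.le hρ, he, ← hq]
      ring
    calc ρ * (Real.log (ε ^ 2) - Real.log ρ)
        ≤ ρ * ((ε ^ 2 / ρ) ^ (1 - α / 2) / (1 - α / 2)) := by
          rw [hlogu]; exact mul_le_mul_of_nonneg_left hloglt hρ
      _ = ρ ^ (α / 2) * ε ^ ((2 : ℝ) - α) / (1 - α / 2) := hρpow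

/-- Convergence of the regularized energy on `ℝ^d` for data in `L^α`, `0 < α < 2`:
`|∫ λ(F(|u₀|²) − F_n^ε(|u₀|²))| ≤ |λ| ‖u₀‖_{L^α}^α ε^{2−α}/(1 − α/2)`. -/
theorem stmt13 (d : ℕ) (α : ℝ) (hα0 : 0 < α) (hα2 : α < 2) (lam : ℝ)
    (n : ℕ) (hn : 2 ≤ n) (ε : ℝ) (hε : 0 < ε) (u₀ : (Fin d → ℝ) → ℂ)
    (hu : Measurable u₀)
    (hint : Integrable (fun x => ‖u₀ x‖ ^ α)) :
    |∫ x, lam * (Fd (‖u₀ x‖ ^ 2) - Freg n ε (‖u₀ x‖ ^ 2))| ≤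
      |lam| * (∫ x, ‖u₀ x‖ ^ α) * ε ^ ((2 : ℝ) - α) / (1 - α / 2) := by
  have hβ : (0:ℝ) < 1 - α / 2 := by linarith
  set C : ℝ := ε ^ ((2 : ℝ) - α) / (1 - α / 2) with hC
  have hC0 : 0 ≤ C := by positivity
  -- pointwise bound
  have hpt : ∀ x, |Fd (‖u₀ x‖ ^ 2) - Freg n ε (‖u₀ x‖ ^ 2)|
      ≤ ‖u₀ x‖ ^ α * C := by
    intro x
    have ha : (0:ℝ) ≤ ‖u₀ x‖ := norm_nonneg _
    have := pointwise_bound n hε (by positivity : (0:ℝ) ≤ ‖u₀ x‖ ^ 2) hα0 hα2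
    have hpow : ((‖u₀ x‖ ^ 2 : ℝ)) ^ (α / 2) = ‖u₀ x‖ ^ α := by
      rw [← Real.rpow_natCast (‖u₀ x‖) 2, ← Real.rpow_mul ha,
        show ((2:ℕ):ℝ) * (α / 2) = α by push_cast; ring]
    calc |Fd (‖u₀ x‖ ^ 2) - Freg n ε (‖u₀ x‖ ^ 2)|
        ≤ (‖u₀ x‖ ^ 2 : ℝ) ^ (α / 2) * ε ^ ((2 : ℝ) - α) / (1 - α / 2) := this
      _ = ‖u₀ x‖ ^ α * C := by rw [hpow, hC]; ring
  -- measurability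
  have hmρ : Measurable (fun x => (‖u₀ x‖ ^ 2 : ℝ)) :=
    (continuous_norm.measurable.comp hu).pow_const 2
  have hmF : Measurable Fd := by
    unfold Fd
    exact (measurable_id.mul Real.measurable_log).sub measurable_id
  have hmFr : Measurable (Freg n ε) := by
    unfold Freg
    refine Measurable.ite (measurableSet_le measurable_const measurable_id) hmF ?_
    apply measurable_id.mul
    unfold Qpoly
    apply Measurable.sub measurable_const
    exact Finset.measurable_sum _ fun k _ =>
      (measurable_const.mul (((measurable_const.sub
        (measurable_id.div_const _)).pow_const k))).comp measurable_id
  have hmg : Measurable (fun x =>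
      lam * (Fd (‖u₀ x‖ ^ 2) - Freg n ε (‖u₀ x‖ ^ 2))) :=
    measurable_const.mul ((hmF.comp hmρ).sub (hmFr.comp hmρ))
  -- integrability
  have hbound : Integrable (fun x => |lam| * (‖u₀ x‖ ^ α * C)) :=
    (hint.mul_const C).const_mul |lam|
  have hg : Integrable (fun x =>
      lam * (Fd (‖u₀ x‖ ^ 2) - Freg n ε (‖u₀ x‖ ^ 2))) := by
    refine hbound.mono' hmg.aestronglyMeasurable (Filter.Eventually.of_forall fun x => ?_)
    rw [Real.norm_eq_abs, abs_mul]
    exact mul_le_mul_of_nonneg_left (hpt x) (abs_nonneg lam)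
  have hg2 : Integrable (fun x =>
      Fd (‖u₀ x‖ ^ 2) - Freg n ε (‖u₀ x‖ ^ 2)) := by
    refine (hint.mul_const C).mono' ((hmF.comp hmρ).sub (hmFr.comp hmρ)).aestronglyMeasurable
      (Filter.Eventually.of_forall fun x => ?_)
    rw [Real.norm_eq_abs]
    exact hpt x
  calc |∫ x, lam * (Fd (‖u₀ x‖ ^ 2) - Freg n ε (‖u₀ x‖ ^ 2))|
      ≤ ∫ x, |lam| * |Fd (‖u₀ x‖ ^ 2) - Freg n ε (‖u₀ x‖ ^ 2)| := by
        simpa [Real.norm_eq_abs, abs_mul] using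
          norm_integral_le_integral_norm (μ := volume) fun x =>
            lam * (Fd (‖u₀ x‖ ^ 2) - Freg n ε (‖u₀ x‖ ^ 2))
    _ ≤ ∫ x, |lam| * (‖u₀ x‖ ^ α * C) := by
        refine integral_mono (hg2.abs.const_mul _) hbound fun x => ?_
        exact mul_le_mul_of_nonneg_left (hpt x) (abs_nonneg lam)
    _ = |lam| * (∫ x, ‖u₀ x‖ ^ α) * ε ^ ((2 : ℝ) - α) / (1 - α / 2) := by
        rw [integral_const_mul]
        simp_rw [integral_mul_const]
        rw [hC]; ring
end

section
/- Let n ≥ 2, 0 < ε ≤ 1, D > 0, and suppose ε ≤ min(√n/D, e^{−3n}). Then for all complex numbers y, z with |y| ≤ D and |z| ≤ D, one has |y·f_n^ε(|y|²) − z·f_n^ε(|z|²)| ≤ 4 ln(ε^{−1})·|y − z|. -/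
open Real Complex

/-- auxiliary sum -/
noncomputable def Gfun (n : ℕ) (u : ℝ) : ℝ :=
  ((n + 1 : ℝ) / n) * u ^ n + ∑ k ∈ Finset.Icc 1 (n - 1), (1 / (k : ℝ)) * u ^ k

lemma qfun_eq_G (n : ℕ) (ε ρ : ℝ) :
    qfun n ε ρ = Real.log (ε ^ 2) - Gfun n (1 - ρ / ε ^ 2) := by
  unfold qfun Gfun; ring

lemma pow_sub_pow_le' {u v : ℝ} (hu : 0 ≤ u) (huv : u ≤ v) (hv : v ≤ 1) :
    ∀ k : ℕ, v ^ k - u ^ k ≤ k * (v - u) := by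
  intro k
  induction k with
  | zero => simp
  | succ k ih =>
    have hv0 : 0 ≤ v := le_trans hu huv
    have huk : u ^ k ≤ v ^ k := pow_le_pow_left₀ hu huv k
    have hvk1 : v ^ k ≤ 1 := pow_le_one₀ hv0 hv
    have huk0 : 0 ≤ u ^ k := pow_nonneg hu k
    have h : v ^ (k + 1) - u ^ (k + 1) = v * (v ^ k - u ^ k) + (v - u) * u ^ k := by ring
    have huk1 : u ^ k ≤ 1 := le_trans huk hvk1
    push_cast
    nlinarith [ih]

lemma Gfun_nonneg (n : ℕ) {u : ℝ} (hu : 0 ≤ u) : 0 ≤ Gfun n u := by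
  unfold Gfun
  have h1 : (0:ℝ) ≤ ((n + 1 : ℝ) / n) * u ^ n := by positivity
  have h2 : (0:ℝ) ≤ ∑ k ∈ Finset.Icc 1 (n - 1), (1 / (k : ℝ)) * u ^ k := by
    apply Finset.sum_nonneg; intro k _; positivity
  linarith

lemma Gfun_mono (n : ℕ) {u v : ℝ} (hu : 0 ≤ u) (huv : u ≤ v) : Gfun n u ≤ Gfun n v := by
  unfold Gfun
  apply add_le_add
  · exact mul_le_mul_of_nonneg_left (pow_le_pow_left₀ hu huv _) (by positivity)
  · apply Finset.sum_le_sum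
    intro k _
    exact mul_le_mul_of_nonneg_left (pow_le_pow_left₀ hu huv _) (by positivity)

lemma Gfun_zero (n : ℕ) (hn : 2 ≤ n) : Gfun n 0 = 0 := by
  unfold Gfun
  have hn0 : n ≠ 0 := by omega
  rw [zero_pow hn0]
  have : ∀ k ∈ Finset.Icc 1 (n - 1), (1 / (k : ℝ)) * (0:ℝ) ^ k = 0 := by
    intro k hk
    simp only [Finset.mem_Icc] at hk
    rw [zero_pow (by omega)]
    ring
  rw [Finset.sum_congr rfl this]
  simp

lemma Gfun_le (n : ℕ) (hn : 2 ≤ n) {u : ℝ} (hu0 : 0 ≤ u) (hu : u ≤ 1) :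
    Gfun n u ≤ (n : ℝ) + 1 / 2 := by
  unfold Gfun
  have hn0 : (0:ℝ) < n := by exact_mod_cast (by omega : 0 < n)
  have hn2 : (2:ℝ) ≤ n := by exact_mod_cast hn
  have h1 : ((n + 1 : ℝ) / n) * u ^ n ≤ 3 / 2 := by
    have hun : u ^ n ≤ 1 := pow_le_one₀ hu0 hu
    have hun0 : 0 ≤ u ^ n := pow_nonneg hu0 n
    have hc : ((n + 1 : ℝ) / n) ≤ 3 / 2 := by
      rw [div_le_iff₀ hn0]; linarith
    calc ((n + 1 : ℝ) / n) * u ^ n ≤ ((n + 1 : ℝ) / n) * 1 := by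
          apply mul_le_mul_of_nonneg_left hun; positivity
      _ ≤ 3 / 2 := by rw [mul_one]; exact hc
  have h2 : ∑ k ∈ Finset.Icc 1 (n - 1), (1 / (k : ℝ)) * u ^ k ≤ (n : ℝ) - 1 := by
    calc ∑ k ∈ Finset.Icc 1 (n - 1), (1 / (k : ℝ)) * u ^ k
        ≤ ∑ k ∈ Finset.Icc 1 (n - 1), (1:ℝ) := by
          apply Finset.sum_le_sum
          intro k hk
          simp only [Finset.mem_Icc] at hk
          have hk1 : (1:ℝ) ≤ (k:ℝ) := by exact_mod_cast hk.1
          have huk : u ^ k ≤ 1 := pow_le_one₀ hu0 hu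
          have huk0 : 0 ≤ u ^ k := pow_nonneg hu0 k
          have : (1 / (k:ℝ)) ≤ 1 := by
            rw [div_le_one (by linarith)]; exact hk1
          nlinarith
      _ = ((n - 1 : ℕ) : ℝ) := by
          rw [Finset.sum_const, Nat.card_Icc]
          simp
      _ ≤ (n : ℝ) - 1 := by
          rw [Nat.cast_sub (by omega)]
          simp
  linarith

lemma Gfun_diff_le (n : ℕ) (hn : 2 ≤ n) {u v : ℝ} (hu0 : 0 ≤ u) (huv : u ≤ v) (hv : v ≤ 1) :
    Gfun n v - Gfun n u ≤ 2 * n * (v - u) := by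
  have hn0 : (0:ℝ) < n := by exact_mod_cast (by omega : 0 < n)
  have h1 : v ^ n - u ^ n ≤ n * (v - u) := pow_sub_pow_le' hu0 huv hv n
  have h2 : ∀ k ∈ Finset.Icc 1 (n - 1), (1 / (k : ℝ)) * v ^ k - (1 / (k : ℝ)) * u ^ k ≤ v - u := by
    intro k hk
    simp only [Finset.mem_Icc] at hk
    have hk0 : (0:ℝ) < k := by exact_mod_cast hk.1
    have h := pow_sub_pow_le' hu0 huv hv k
    have : (1 / (k : ℝ)) * v ^ k - (1 / (k : ℝ)) * u ^ k = (1 / (k:ℝ)) * (v ^ k - u ^ k) := by ring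
    rw [this]
    calc (1 / (k:ℝ)) * (v ^ k - u ^ k) ≤ (1 / (k:ℝ)) * ((k:ℝ) * (v - u)) := by
          apply mul_le_mul_of_nonneg_left h; positivity
      _ = v - u := by field_simp
  have hcard : ((Finset.Icc 1 (n - 1)).card : ℝ) = (n : ℝ) - 1 := by
    rw [Nat.card_Icc]
    simp
    rw [Nat.cast_sub (by omega)]
    simp
  calc Gfun n v - Gfun n u
      = ((n + 1 : ℝ) / n) * (v ^ n - u ^ n)
        + ∑ k ∈ Finset.Icc 1 (n - 1), ((1 / (k : ℝ)) * v ^ k - (1 / (k : ℝ)) * u ^ k) := by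
        unfold Gfun; rw [Finset.sum_sub_distrib]; ring
    _ ≤ ((n + 1 : ℝ) / n) * ((n:ℝ) * (v - u)) + ∑ k ∈ Finset.Icc 1 (n - 1), (v - u) := by
        apply add_le_add
        · apply mul_le_mul_of_nonneg_left h1; positivity
        · exact Finset.sum_le_sum h2
    _ = ((n:ℝ) + 1) * (v - u) + ((n:ℝ) - 1) * (v - u) := by
        rw [Finset.sum_const, nsmul_eq_mul, hcard]
        field_simp
    _ = 2 * n * (v - u) := by ring

lemma freg_of_le (n : ℕ) (hn : 2 ≤ n) {ε ρ : ℝ} (hε : 0 < ε) (h : ρ ≤ ε ^ 2) :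
    freg n ε ρ = qfun n ε ρ := by
  rcases lt_or_eq_of_le h with h' | h'
  · unfold freg; rw [if_neg (not_le.mpr h')]
  · subst h'
    unfold freg
    rw [if_pos le_rfl, qfun_eq_G]
    have hε2 : (ε:ℝ) ^ 2 ≠ 0 := by positivity
    rw [div_self hε2]
    simp [Gfun_zero n hn]

lemma freg_mono (n : ℕ) (hn : 2 ≤ n) {ε ρ₁ ρ₂ : ℝ} (hε : 0 < ε)
    (h0 : 0 ≤ ρ₁) (h12 : ρ₁ ≤ ρ₂) : freg n ε ρ₁ ≤ freg n ε ρ₂ := by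
  have hε2 : (0:ℝ) < ε ^ 2 := by positivity
  rcases le_or_gt (ε ^ 2) ρ₁ with h1 | h1
  · have h2 : ε ^ 2 ≤ ρ₂ := le_trans h1 h12
    unfold freg
    rw [if_pos h1, if_pos h2]
    exact Real.log_le_log (lt_of_lt_of_le hε2 h1) h12
  · have hq1 : freg n ε ρ₁ = qfun n ε ρ₁ := freg_of_le n hn hε h1.le
    have hu1 : 0 ≤ 1 - ρ₁ / ε ^ 2 := by
      have : ρ₁ / ε ^ 2 ≤ 1 := by rw [div_le_one hε2]; exact h1.le
      linarith
    have hqle : qfun n ε ρ₁ ≤ Real.log (ε ^ 2) := by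
      rw [qfun_eq_G]
      have := Gfun_nonneg n hu1
      linarith
    rcases le_or_gt (ε ^ 2) ρ₂ with h2 | h2
    · have : freg n ε ρ₂ = Real.log ρ₂ := by unfold freg; rw [if_pos h2]
      rw [this, hq1]
      exact le_trans hqle (Real.log_le_log hε2 h2)
    · have hq2 : freg n ε ρ₂ = qfun n ε ρ₂ := freg_of_le n hn hε h2.le
      rw [hq1, hq2, qfun_eq_G, qfun_eq_G]
      have hu2 : 0 ≤ 1 - ρ₂ / ε ^ 2 := by
        have : ρ₂ / ε ^ 2 ≤ 1 := by rw [div_le_one hε2]; exact h2.le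
        linarith
      have huu : 1 - ρ₂ / ε ^ 2 ≤ 1 - ρ₁ / ε ^ 2 := by
        have : ρ₁ / ε ^ 2 ≤ ρ₂ / ε ^ 2 := by gcongr
        linarith
      have := Gfun_mono n hu2 huu
      linarith

lemma freg_bound (n : ℕ) (hn : 2 ≤ n) {ε ρ : ℝ} (hε : 0 < ε) (hε1 : ε ≤ 1)
    (h0 : 0 ≤ ρ) (hρ : ρ ≤ (n : ℝ) / ε ^ 2) :
    |freg n ε ρ| ≤ 2 * Real.log ε⁻¹ + n + 1 / 2 := by
  have hε2 : (0:ℝ) < ε ^ 2 := by positivity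
  have hn0 : (0:ℝ) < n := by exact_mod_cast (by omega : 0 < n)
  have hL : Real.log ε⁻¹ = -Real.log ε := Real.log_inv ε
  have hL0 : 0 ≤ Real.log ε⁻¹ := by
    rw [hL]
    have := Real.log_nonpos hε.le hε1
    linarith
  have hlogε2 : Real.log (ε ^ 2) = 2 * Real.log ε := by
    rw [Real.log_pow]; push_cast; ring
  rw [abs_le]
  constructor
  · -- lower bound: freg ρ ≥ freg 0 ≥ log ε² - (n + 1/2)
    have hmono : freg n ε 0 ≤ freg n ε ρ := freg_mono n hn hε le_rfl h0
    have h00 : freg n ε 0 = qfun n ε 0 := freg_of_le n hn hε (by positivity)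
    have : qfun n ε 0 = Real.log (ε ^ 2) - Gfun n 1 := by
      rw [qfun_eq_G]
      norm_num
    have hG1 : Gfun n 1 ≤ (n:ℝ) + 1 / 2 := Gfun_le n hn zero_le_one le_rfl
    rw [hL] at *
    rw [h00, this] at hmono
    rw [hlogε2] at hmono
    linarith
  · rcases le_or_gt (ε ^ 2) ρ with h1 | h1
    · have hfr : freg n ε ρ = Real.log ρ := by unfold freg; rw [if_pos h1]
      rw [hfr]
      have hρ0 : 0 < ρ := lt_of_lt_of_le hε2 h1
      have h2 : Real.log ρ ≤ Real.log ((n:ℝ) / ε ^ 2) := Real.log_le_log hρ0 hρ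
      have h3 : Real.log ((n:ℝ) / ε ^ 2) = Real.log n - Real.log (ε ^ 2) := by
        rw [Real.log_div (by positivity) (by positivity)]
      have h4 : Real.log (n:ℝ) ≤ (n:ℝ) := by
        have := Real.log_le_sub_one_of_pos hn0
        linarith
      rw [hL]
      rw [h3, hlogε2] at h2
      linarith
    · have hfr : freg n ε ρ = qfun n ε ρ := freg_of_le n hn hε h1.le
      have hu1 : 0 ≤ 1 - ρ / ε ^ 2 := by
        have : ρ / ε ^ 2 ≤ 1 := by rw [div_le_one hε2]; exact h1.le
        linarith
      have hqle : qfun n ε ρ ≤ Real.log (ε ^ 2) := by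
        rw [qfun_eq_G]
        have := Gfun_nonneg n hu1
        linarith
      rw [hL]
      rw [hlogε2] at hqle
      rw [hfr]
      have : Real.log ε ≤ 0 := Real.log_nonpos hε.le hε1
      linarith

lemma freg_lip_small (n : ℕ) (hn : 2 ≤ n) {ε a b : ℝ} (hε : 0 < ε)
    (hb0 : 0 ≤ b) (hba : b ≤ a) (haε : a ≤ ε) :
    b * (freg n ε (a ^ 2) - freg n ε (b ^ 2)) ≤ 4 * n * (a - b) := by
  have hε2 : (0:ℝ) < ε ^ 2 := by positivity
  have ha0 : 0 ≤ a := le_trans hb0 hba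
  have ha2 : a ^ 2 ≤ ε ^ 2 := by nlinarith
  have hb2 : b ^ 2 ≤ ε ^ 2 := by nlinarith
  have hfa : freg n ε (a ^ 2) = qfun n ε (a ^ 2) := freg_of_le n hn hε ha2
  have hfb : freg n ε (b ^ 2) = qfun n ε (b ^ 2) := freg_of_le n hn hε hb2
  rw [hfa, hfb, qfun_eq_G, qfun_eq_G]
  set u := 1 - a ^ 2 / ε ^ 2 with hu
  set v := 1 - b ^ 2 / ε ^ 2 with hv
  have hu0 : 0 ≤ u := by
    have : a ^ 2 / ε ^ 2 ≤ 1 := by rw [div_le_one hε2]; exact ha2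
    simp only [hu]; linarith
  have huv : u ≤ v := by
    have : b ^ 2 / ε ^ 2 ≤ a ^ 2 / ε ^ 2 := by
      have hba2 : b ^ 2 ≤ a ^ 2 := by nlinarith
      gcongr
    simp only [hu, hv]; linarith
  have hv1 : v ≤ 1 := by
    have : 0 ≤ b ^ 2 / ε ^ 2 := by positivity
    simp only [hv]; linarith
  have hdiff : Gfun n v - Gfun n u ≤ 2 * n * (v - u) := Gfun_diff_le n hn hu0 huv hv1
  have hvu : v - u = (a ^ 2 - b ^ 2) / ε ^ 2 := by
    simp only [hu, hv]; ring
  have hn0 : (0:ℝ) < n := by exact_mod_cast (by omega : 0 < n)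
  have hgoal : b * (Gfun n v - Gfun n u) ≤ 4 * n * (a - b) := by
    have h1 : b * (Gfun n v - Gfun n u) ≤ b * (2 * n * ((a ^ 2 - b ^ 2) / ε ^ 2)) := by
      rw [← hvu]
      apply mul_le_mul_of_nonneg_left hdiff hb0
    have h2 : b * (2 * n * ((a ^ 2 - b ^ 2) / ε ^ 2)) ≤ 4 * n * (a - b) := by
      have hab : b * (a + b) ≤ 2 * ε ^ 2 := by nlinarith
      have hamb : (0:ℝ) ≤ a - b := by linarith
      have e : b * (2 * n * ((a ^ 2 - b ^ 2) / ε ^ 2))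
          = (2 * n * (b * (a + b)) / ε ^ 2) * (a - b) := by
        field_simp
        ring
      rw [e]
      apply mul_le_mul_of_nonneg_right _ hamb
      rw [div_le_iff₀ hε2]
      nlinarith
    linarith
  linarith [hgoal]

lemma log_piece (n : ℕ) (hn : 2 ≤ n) {ε a b : ℝ} (hε : 0 < ε)
    (hεb : ε ≤ b) (hba : b ≤ a) :
    b * (freg n ε (a ^ 2) - freg n ε (b ^ 2)) ≤ 2 * (a - b) := by
  have hb0 : 0 < b := lt_of_lt_of_le hε hεb
  have ha0 : 0 < a := lt_of_lt_of_le hb0 hba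
  have hb2 : ε ^ 2 ≤ b ^ 2 := by nlinarith
  have ha2 : ε ^ 2 ≤ a ^ 2 := by nlinarith
  have hfa : freg n ε (a ^ 2) = Real.log (a ^ 2) := by unfold freg; rw [if_pos ha2]
  have hfb : freg n ε (b ^ 2) = Real.log (b ^ 2) := by unfold freg; rw [if_pos hb2]
  rw [hfa, hfb]
  have h1 : Real.log (a ^ 2) - Real.log (b ^ 2) = 2 * Real.log (a / b) := by
    rw [Real.log_div (ne_of_gt ha0) (ne_of_gt hb0), Real.log_pow, Real.log_pow]
    push_cast
    try ring
  have h2 : Real.log (a / b) ≤ a / b - 1 := Real.log_le_sub_one_of_pos (by positivity)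
  rw [h1]
  have h3 : b * (2 * Real.log (a / b)) ≤ b * (2 * (a / b - 1)) := by
    apply mul_le_mul_of_nonneg_left _ hb0.le
    linarith
  have h4 : b * (2 * (a / b - 1)) = 2 * (a - b) := by field_simp
  linarith

lemma freg_lip (n : ℕ) (hn : 2 ≤ n) {ε a b : ℝ} (hε : 0 < ε)
    (hb0 : 0 ≤ b) (hba : b ≤ a) :
    b * (freg n ε (a ^ 2) - freg n ε (b ^ 2)) ≤ 4 * n * (a - b) := by
  have hn2 : (2:ℝ) ≤ n := by exact_mod_cast hn
  have ha0 : 0 ≤ a := le_trans hb0 hba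
  rcases le_or_gt a ε with haε | haε
  · exact freg_lip_small n hn hε hb0 hba haε
  · rcases le_or_gt ε b with hεb | hεb
    · have h := log_piece n hn hε hεb hba
      nlinarith [hba, hn2]
    · -- b < ε < a : split at ε
      have h1 : b * (freg n ε (a ^ 2) - freg n ε (ε ^ 2)) ≤ 2 * (a - ε) := by
        have hεε : ε ^ 2 ≤ ε ^ 2 := le_rfl
        have ha2 : ε ^ 2 ≤ a ^ 2 := by nlinarith
        have hfa : freg n ε (a ^ 2) = Real.log (a ^ 2) := by unfold freg; rw [if_pos ha2]
        have hfe : freg n ε (ε ^ 2) = Real.log (ε ^ 2) := by unfold freg; rw [if_pos hεε]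
        rw [hfa, hfe]
        have ha0' : 0 < a := lt_trans hε haε
        have hlog : Real.log (a ^ 2) - Real.log (ε ^ 2) = 2 * Real.log (a / ε) := by
          rw [Real.log_div (ne_of_gt ha0') (ne_of_gt hε), Real.log_pow, Real.log_pow]
          push_cast
          try ring
        have h2 : Real.log (a / ε) ≤ a / ε - 1 := Real.log_le_sub_one_of_pos (by positivity)
        have hlognn : 0 ≤ Real.log (a / ε) := by
          apply Real.log_nonneg
          rw [le_div_iff₀ hε]; linarith
        rw [hlog]
        have h3 : b * (2 * Real.log (a / ε)) ≤ ε * (2 * Real.log (a / ε)) := by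
          apply mul_le_mul_of_nonneg_right hεb.le
          linarith
        have h4 : ε * (2 * (a / ε - 1)) = 2 * (a - ε) := by field_simp
        have h5 : ε * (2 * Real.log (a / ε)) ≤ ε * (2 * (a / ε - 1)) := by
          apply mul_le_mul_of_nonneg_left _ hε.le
          linarith
        linarith
      have h2 : b * (freg n ε (ε ^ 2) - freg n ε (b ^ 2)) ≤ 4 * n * (ε - b) :=
        freg_lip_small n hn hε hb0 hεb.le le_rfl
      have h3 : 2 * (a - ε) ≤ 4 * n * (a - ε) := by nlinarith [hn2, haε]
      nlinarith [h1, h2, h3]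

lemma key_half (n : ℕ) (hn : 2 ≤ n) (ε : ℝ) (hε : 0 < ε) (hε1 : ε ≤ 1)
    (D : ℝ) (hD : 0 < D)
    (hεsmall : ε ≤ min (Real.sqrt n / D) (Real.exp (-(3 * n : ℝ))))
    (y z : ℂ) (hy : ‖y‖ ≤ D) (hz : ‖z‖ ≤ D)
    (hba : ‖z‖ ≤ ‖y‖) :
    ‖y * (freg n ε (‖y‖ ^ 2) : ℝ) -
        z * (freg n ε (‖z‖ ^ 2) : ℝ)‖ ≤
      4 * Real.log ε⁻¹ * ‖y - z‖ := by
  set a := ‖y‖ with hadef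
  set b := ‖z‖ with hbdef
  set A := freg n ε (a ^ 2) with hAdef
  set B := freg n ε (b ^ 2) with hBdef
  set L := Real.log ε⁻¹ with hLdef
  have hn2 : (2:ℝ) ≤ n := by exact_mod_cast hn
  have hεD : ε ≤ Real.sqrt n / D := le_trans hεsmall (min_le_left _ _)
  have hεe : ε ≤ Real.exp (-(3 * n : ℝ)) := le_trans hεsmall (min_le_right _ _)
  have hL3 : 3 * (n:ℝ) ≤ L := by
    have h1 : Real.log ε ≤ Real.log (Real.exp (-(3 * n : ℝ))) := Real.log_le_log hε hεe
    rw [Real.log_exp] at h1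
    rw [hLdef, Real.log_inv]
    linarith
  have hL0 : 0 ≤ L := by nlinarith [hn2]
  have ha0 : 0 ≤ a := norm_nonneg y
  have hb0 : 0 ≤ b := norm_nonneg z
  have hDn : D ^ 2 ≤ (n:ℝ) / ε ^ 2 := by
    have h1 : ε * D ≤ Real.sqrt n := by
      rw [← le_div_iff₀ hD]; exact hεD
    have h2 : (ε * D) ^ 2 ≤ Real.sqrt n ^ 2 := by
      apply pow_le_pow_left₀ (by positivity) h1
    rw [Real.sq_sqrt (by positivity : (0:ℝ) ≤ (n:ℝ))] at h2
    rw [le_div_iff₀ (by positivity : (0:ℝ) < ε ^ 2)]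
    nlinarith
  have ha2n : a ^ 2 ≤ (n:ℝ) / ε ^ 2 := by
    have : a ^ 2 ≤ D ^ 2 := by nlinarith
    linarith
  have hAbound : |A| ≤ 2 * L + n + 1 / 2 :=
    freg_bound n hn hε hε1 (by positivity) ha2n
  have hBA : B ≤ A := freg_mono n hn hε (by positivity) (by nlinarith)
  have hlip : b * (A - B) ≤ 4 * n * (a - b) := freg_lip n hn hε hb0 hba
  have habsub : a - b ≤ ‖y - z‖ := by
    have h := norm_add_le (y - z) z
    simp only [sub_add_cancel] at h
    linarith
  have hyz0 : 0 ≤ ‖y - z‖ := norm_nonneg _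
  have hsplit : y * (A:ℂ) - z * (B:ℂ) = (y - z) * (A:ℂ) + z * ((A:ℂ) - (B:ℂ)) := by ring
  calc ‖y * (A:ℂ) - z * (B:ℂ)‖
      ≤ ‖(y - z) * (A:ℂ)‖ + ‖z * ((A:ℂ) - (B:ℂ))‖ := by
        rw [hsplit]; exact norm_add_le _ _
    _ = ‖y - z‖ * |A| + b * |A - B| := by
        rw [norm_mul, norm_mul, ← Complex.ofReal_sub, Complex.norm_real, Complex.norm_real, Real.norm_eq_abs, Real.norm_eq_abs]
    _ ≤ ‖y - z‖ * (2 * L + n + 1 / 2) + 4 * n * (a - b) := by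
        apply add_le_add
        · exact mul_le_mul_of_nonneg_left hAbound hyz0
        · rw [_root_.abs_of_nonneg (by linarith : (0:ℝ) ≤ A - B)]
          exact hlip
    _ ≤ ‖y - z‖ * (2 * L + n + 1 / 2) + 4 * n * ‖y - z‖ := by
        apply add_le_add le_rfl
        exact mul_le_mul_of_nonneg_left habsub (by positivity)
    _ ≤ 4 * L * ‖y - z‖ := by nlinarith [hyz0, hL3, hn2]

set_option maxHeartbeats 1000000 in
/-- For `n ≥ 2`, `0 < ε ≤ 1` with `ε ≤ min(√n/D, e^{−3n})`, and `|y|, |z| ≤ D`: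
`|y f_n^ε(|y|²) − z f_n^ε(|z|²)| ≤ 4 ln(ε⁻¹)|y − z|`. -/
theorem stmt18 (n : ℕ) (hn : 2 ≤ n) (ε : ℝ) (hε : 0 < ε) (hε1 : ε ≤ 1)
    (D : ℝ) (hD : 0 < D)
    (hεsmall : ε ≤ min (Real.sqrt n / D) (Real.exp (-(3 * n : ℝ))))
    (y z : ℂ) (hy : ‖y‖ ≤ D) (hz : ‖z‖ ≤ D) :
    ‖y * (freg n ε (‖y‖ ^ 2) : ℝ) -
        z * (freg n ε (‖z‖ ^ 2) : ℝ)‖ ≤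
      4 * Real.log ε⁻¹ * ‖y - z‖ := by
  rcases le_total (‖z‖) (‖y‖) with h | h
  · exact key_half n hn ε hε hε1 D hD hεsmall y z hy hz h
  · have hk := key_half n hn ε hε hε1 D hD hεsmall z y hz hy h
    have e2 : ‖z - y‖ = ‖y - z‖ :=
      norm_sub_rev z y
    have e1 : ‖y * (freg n ε (‖y‖ ^ 2) : ℝ) -
          z * (freg n ε (‖z‖ ^ 2) : ℝ)‖
        = ‖z * (freg n ε (‖z‖ ^ 2) : ℝ) -
          y * (freg n ε (‖y‖ ^ 2) : ℝ)‖ :=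
      norm_sub_rev _ _
    rw [e1, ← e2]
    exact hk
end
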